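/- arXiv:1702.07589 — 2 statements merged into one kernel-verified Lean document; each statement's English description precedes it below -/
import Mathlib

section
/- Let G be a map on an orientable surface of genus g, let D and D' be orientations of the primal-dual completion Ĝ with D a Schnyder orientation, and set T = D\D'. Then: (1) D' is a Schnyder orientation if and only if T is partitionable; (2) D' is a Schnyder orientation having the same outdegrees as D if and only if T is Eulerian-partitionable; (3) D' is a Schnyder orientation having the same outdegrees and the same type as D if and only if T is 0-homologous, i.e. D and D' are homologous. -/
/-
Common combinatorial framework.

Maps on compact orientable surfaces are formalized as rotation systems
(combinatorial maps): a finite set of darts together with a permutation `σ`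
(counterclockwise successor around each vertex) and a fixed-point-free
involution `α` (reversal of darts).  Vertices are the orbits of `σ`, edges the
orbits of `α`, and the (counterclockwise) facial walks are the orbits of
`σ⁻¹ * α`.  The genus is recovered from the Euler characteristic.

Homology of the map is formalized by flows: integer-valued functions on darts;
the subgroup generated by the facial flows plays the role of the boundary
subgroup, two flows being homologous when their difference belongs to it.
Contractibility is formalized combinatorially: null-homotopy of closed walks is
generated by insertion/deletion of spurs and of facial boundaries (and rotation
of the base point).

Schnyder woods are formalized by their angle labellings (corners ≃ darts, the
corner of dart `d` being the corner between `d` and `σ d` at the tail of `d`);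
this follows the paper, where (generalized) Schnyder woods are exactly the
EDGE, ℕ*-VERTEX, ℕ*-FACE angle labellings, and where around an edge `{d, α d}`
the four corners in clockwise order are `d, σ⁻¹ (α d), α d, σ⁻¹ d`.
-/

noncomputable section
open scoped Classical

namespace Schnyder

/-- The setoid whose classes are the orbits (cycles) of a permutation;
for the vertex rotation `σ` the classes are the vertices of the map, for the
edge involution `α` they are the edges, for the face permutation they are the
faces. -/
def permSetoid {X : Type*} (f : Equiv.Perm X) : Setoid X where
  r := f.SameCycle
  iseqv := ⟨fun x => ⟨0, by simp⟩, fun h => h.symm, fun h h' => h.trans h'⟩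

/-- The number of orbits of a permutation. -/
def numOrbits {X : Type*} (f : Equiv.Perm X) : ℕ :=
  Nat.card (Quotient (permSetoid f))

/-- `ccwSector σ x y d` : rotating counterclockwise (iterating `σ`) from the dart
`x`, the dart `d` is met strictly after `x` and before the first occurrence of
`y`; i.e. `d` lies in the counterclockwise sector from `x` to `y` (both
excluded). -/
def ccwSector {X : Type*} (σ : Equiv.Perm X) (x y d : X) : Prop :=
  ∃ k : ℕ, 0 < k ∧ (σ ^ k) x = d ∧ ∀ l : ℕ, 0 < l → l ≤ k → (σ ^ l) x ≠ y

def cyclicNext {n : ℕ} (h : 0 < n) (k : Fin n) : Fin n :=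
  ⟨((k : ℕ) + 1) % n, Nat.mod_lt _ h⟩

def cyclicPrev {n : ℕ} (h : 0 < n) (k : Fin n) : Fin n :=
  ⟨((k : ℕ) + (n - 1)) % n, Nat.mod_lt _ h⟩

/-- The face permutation: its orbits are the (counterclockwise) facial walks of
the map with vertex rotation `σ` and edge involution `α`. -/
def fperm {X : Type*} (σ α : Equiv.Perm X) : Equiv.Perm X := σ⁻¹ * α

/-- A closed walk in the map with vertex rotation `σ` and edge involution `α`:
a cyclic sequence of darts, consecutive darts being chained head-to-tail. -/
structure CWalk {X : Type*} (σ α : Equiv.Perm X) where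
  n : ℕ
  pos : 0 < n
  darts : Fin n → X
  chain : ∀ k : Fin n, σ.SameCycle (α (darts k)) (darts (cyclicNext pos k))

namespace CWalk

variable {X : Type*} {σ α : Equiv.Perm X}

/-- The characteristic flow of a closed walk. -/
def flow (W : CWalk σ α) : X → ℤ := fun d =>
  ∑ k : Fin W.n, ((if W.darts k = d then (1 : ℤ) else 0) - (if W.darts k = α d then 1 else 0))

/-- A closed walk is a cycle when it passes at most once through each vertex. -/
def IsCycle (W : CWalk σ α) : Prop :=
  ∀ k k' : Fin W.n, σ.SameCycle (W.darts k) (W.darts k') → k = k'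

def Mem (W : CWalk σ α) (d : X) : Prop := ∃ k, W.darts k = d

/-- Two closed walks intersect when they share a vertex. -/
def Intersects (W W' : CWalk σ α) : Prop :=
  ∃ k k', σ.SameCycle (W.darts k) (W'.darts k')

/-- `W'` is obtained from `W` by reversing all its edges. -/
def IsReversal (W W' : CWalk σ α) : Prop := ∀ d, W.Mem d ↔ W'.Mem (α d)

/-- Two closed walks use exactly the same darts. -/
def SameSupport (W W' : CWalk σ α) : Prop := ∀ d, W.Mem d ↔ W'.Mem d

/-- Edge-disjointness of two closed walks. -/
def EdgeDisjoint (W W' : CWalk σ α) : Prop :=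
  ∀ d, W.Mem d → ¬ W'.Mem d ∧ ¬ W'.Mem (α d)

/-- The list of darts of a closed walk. -/
def toList (W : CWalk σ α) : List X := List.ofFn W.darts

end CWalk

/-- Two (monochromatic) cycles cross when they intersect and are not reversal
of each other. -/
def CrossingCycles {X : Type*} {σ α : Equiv.Perm X} (W W' : CWalk σ α) : Prop :=
  W.Intersects W' ∧ ¬ W.IsReversal W'

/-- The characteristic flow of the counterclockwise facial walk of the face of
the dart `d0`. -/
def faceFlow {X : Type*} (σ α : Equiv.Perm X) (d0 : X) : X → ℤ := fun d =>
  (if (fperm σ α).SameCycle d0 d then (1 : ℤ) else 0)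
    - (if (fperm σ α).SameCycle d0 (α d) then 1 else 0)

/-- The subgroup `𝔽` of flows generated by the (counterclockwise) facial walks. -/
def facialSubgroup {X : Type*} (σ α : Equiv.Perm X) : AddSubgroup (X → ℤ) :=
  AddSubgroup.closure (Set.range (faceFlow σ α))

/-- Two flows are homologous when their difference belongs to `𝔽`. -/
def Homologous {X : Type*} (σ α : Equiv.Perm X) (f g : X → ℤ) : Prop :=
  f - g ∈ facialSubgroup σ α

/-- Two flows are reversely homologous when their sum belongs to `𝔽`. -/
def ReverselyHomologous {X : Type*} (σ α : Equiv.Perm X) (f g : X → ℤ) : Prop :=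
  f + g ∈ facialSubgroup σ α

/-- Two flows are weakly homologous when they are homologous or reversely
homologous. -/
def WeaklyHomologous {X : Type*} (σ α : Equiv.Perm X) (f g : X → ℤ) : Prop :=
  Homologous σ α f g ∨ ReverselyHomologous σ α f g

/-- Antisymmetric dart functions: the flows `ℤ^E` of the paper (with respect to
the reference orientation given by the darts). -/
def IsFlow {X : Type*} (α : Equiv.Perm X) (f : X → ℤ) : Prop := ∀ d, f (α d) = - f d

/-- A finite family of closed walks is a homology-basis when its classes
generate the first homology group: every closed walk equals, modulo the facial
subgroup, an integer combination of the family. -/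
def IsHomologyBasis {X : Type*} (σ α : Equiv.Perm X) {ι : Type*} [Fintype ι]
    (B : ι → CWalk σ α) : Prop :=
  ∀ W : CWalk σ α, ∃ μ : ι → ℤ, W.flow - ∑ i, μ i • (B i).flow ∈ facialSubgroup σ α

/-- `F` is the complete boundary list of one face (starting anywhere on it). -/
def IsFaceBoundary {X : Type*} (σ α : Equiv.Perm X) (F : List X) : Prop :=
  ∃ (d : X) (k : ℕ), 0 < k ∧ ((fperm σ α) ^ k) d = d ∧
    (∀ i : ℕ, 0 < i → i < k → ((fperm σ α) ^ i) d ≠ d) ∧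
    F = (List.range k).map fun i => ((fperm σ α) ^ i) d

/-- Elementary combinatorial homotopy moves on closed walks: deletion of a
spur, deletion of a facial boundary, rotation of the base point. -/
inductive HomotopyStep {X : Type*} (σ α : Equiv.Perm X) : List X → List X → Prop
  | spur (W₁ W₂ : List X) (d : X) : HomotopyStep σ α (W₁ ++ d :: α d :: W₂) (W₁ ++ W₂)
  | face (W₁ W₂ F : List X) (hF : IsFaceBoundary σ α F) :
      HomotopyStep σ α (W₁ ++ F ++ W₂) (W₁ ++ W₂)
  | rot (d : X) (W : List X) : HomotopyStep σ α (d :: W) (W ++ [d])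

/-- A closed walk (given by its dart list) is contractible when it is
null-homotopic. -/
def NullHomotopic {X : Type*} (σ α : Equiv.Perm X) (W : List X) : Prop :=
  Relation.EqvGen (HomotopyStep σ α) W []

/-! ### Schnyder angle labellings -/

/-- The EDGE pattern on the four corner labels in clockwise order around an
edge: either all four labels are equal (type 0 edge), or they are cyclically
`i-1, i, i, i+1` for some colour `i` (type 1 and type 2 edges). -/
def edgePattern (x : Fin 4 → ZMod 3) : Prop :=
  (∀ k, x k = x 0) ∨
    ∃ (i : ZMod 3) (j : Fin 4), x j = i - 1 ∧ x (j + 1) = i ∧ x (j + 2) = i ∧ x (j + 3) = i + 1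

/-- The EDGE condition at the edge `{d, α d}`: in clockwise order around the
edge, the four incident corners are `d, σ⁻¹ (α d), α d, σ⁻¹ d`. -/
def EdgeCond {X : Type*} (σ α : Equiv.Perm X) (lab : X → ZMod 3) (d : X) : Prop :=
  edgePattern ![lab d, lab (σ⁻¹ (α d)), lab (α d), lab (σ⁻¹ d)]

/-- An EDGE angle labelling (= Schnyder labelling). -/
def IsSchnyderLabeling {X : Type*} (σ α : Equiv.Perm X) (lab : X → ZMod 3) : Prop :=
  ∀ d, EdgeCond σ α lab d

/-- ℕ*-VERTEX (in presence of the EDGE condition): no vertex has all its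
corners of the same colour. -/
def VertexNonconstant {X : Type*} (σ : Equiv.Perm X) (lab : X → ZMod 3) : Prop :=
  ∀ d, ∃ d', σ.SameCycle d d' ∧ lab d' ≠ lab d

/-- ℕ*-FACE (in presence of the EDGE condition): no face has all its corners of
the same colour. -/
def FaceNonconstant {X : Type*} (σ α : Equiv.Perm X) (lab : X → ZMod 3) : Prop :=
  ∀ d, ∃ d', (fperm σ α).SameCycle d d' ∧ lab d' ≠ lab d

/-- A (generalized) Schnyder wood, presented by its angle labelling: an EDGE,
ℕ*-VERTEX, ℕ*-FACE angle labelling (on the torus this is exactly a toroidal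
Schnyder wood). -/
def IsSchnyderWood {X : Type*} (σ α : Equiv.Perm X) (lab : X → ZMod 3) : Prop :=
  IsSchnyderLabeling σ α lab ∧ VertexNonconstant σ lab ∧ FaceNonconstant σ α lab

/-- The dart `d` carries the outgoing direction of colour `i` of its edge:
its two adjacent corners at its tail are labelled `i - 1` (counterclockwise
side) and `i + 1` (clockwise side). -/
def OutDart {X : Type*} (σ : Equiv.Perm X) (lab : X → ZMod 3) (i : ZMod 3) (d : X) : Prop :=
  lab d = i - 1 ∧ lab (σ⁻¹ d) = i + 1

/-- A monochromatic cycle of colour `i` (an `i`-cycle): a directed cycle all of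
whose darts are outgoing of colour `i`. -/
def IsMonoCycle {X : Type*} (σ α : Equiv.Perm X) (lab : X → ZMod 3) (i : ZMod 3)
    (C : CWalk σ α) : Prop :=
  C.IsCycle ∧ ∀ k, OutDart σ lab i (C.darts k)

/-- Half-crossing Schnyder wood: some pair of monochromatic cycles of different
colours cross. -/
def HalfCrossingSW {X : Type*} (σ α : Equiv.Perm X) (lab : X → ZMod 3) : Prop :=
  ∃ (i j : ZMod 3) (C C' : CWalk σ α), i ≠ j ∧ IsMonoCycle σ α lab i C ∧
    IsMonoCycle σ α lab j C' ∧ CrossingCycles C C'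

/-- `i`-crossing Schnyder wood: every `i`-cycle crosses every monochromatic
cycle of any other colour. -/
def ICrossingSW {X : Type*} (σ α : Equiv.Perm X) (lab : X → ZMod 3) (i : ZMod 3) : Prop :=
  ∀ (j : ZMod 3) (C C' : CWalk σ α), j ≠ i → IsMonoCycle σ α lab i C →
    IsMonoCycle σ α lab j C' → CrossingCycles C C'

/-- Intersecting Schnyder wood. -/
def IntersectingSW {X : Type*} (σ α : Equiv.Perm X) (lab : X → ZMod 3) : Prop :=
  ∀ (i : ZMod 3) (C : CWalk σ α), IsMonoCycle σ α lab i C →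
    (∃ C', IsMonoCycle σ α lab (i - 1) C' ∧ C.Intersects C') ∧
    (∃ C', IsMonoCycle σ α lab (i + 1) C' ∧ C.Intersects C')

/-- Crossing Schnyder wood. -/
def CrossingSW {X : Type*} (σ α : Equiv.Perm X) (lab : X → ZMod 3) : Prop :=
  ∀ (i : ZMod 3) (C : CWalk σ α), IsMonoCycle σ α lab i C →
    (∃ C', IsMonoCycle σ α lab (i - 1) C' ∧ CrossingCycles C C') ∧
    (∃ C', IsMonoCycle σ α lab (i + 1) C' ∧ CrossingCycles C C')

/-! ### Combinatorial maps -/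

/-- A map on a compact orientable surface, as a rotation system: finitely many
darts, vertex rotation `σ` (counterclockwise), fixed-point-free edge involution
`α`; connectedness makes the embedding cellular. -/
structure CombMap where
  D : Type
  fin : Fintype D
  σ : Equiv.Perm D
  α : Equiv.Perm D
  α_invol : ∀ d, α (α d) = d
  α_fixfree : ∀ d, α d ≠ d
  connected : ∀ d d', Relation.EqvGen (fun a b => b = σ a ∨ b = α a) d d'

attribute [instance] CombMap.fin

namespace CombMap

variable (M : CombMap)

def facePerm : Equiv.Perm M.D := fperm M.σ M.α

abbrev SameVertex (d d' : M.D) : Prop := M.σ.SameCycle d d'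

abbrev SameFace (d d' : M.D) : Prop := M.facePerm.SameCycle d d'

/-- Closed walks of the (primal) map. -/
abbrev ClosedWalk := CWalk M.σ M.α

/-- Closed walks of the dual map (dual vertices = faces of `M`). -/
abbrev DualClosedWalk := CWalk M.facePerm M.α

/-- Euler characteristic `V - E + F`; it equals `2 - 2g` where `g` is the genus
of the surface. -/
def eulerChar : ℤ :=
  (numOrbits M.σ : ℤ) - (numOrbits M.α : ℤ) + (numOrbits M.facePerm : ℤ)

/-- A closed walk is `0`-homologous; on the torus a cycle is contractible if
and only if its flow is `0`-homologous. -/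
def FlowContractible (W : M.ClosedWalk) : Prop := W.flow ∈ facialSubgroup M.σ M.α

/-- No contractible loop. -/
def NoContractibleLoop : Prop :=
  ∀ d : M.D, M.SameVertex d (M.α d) → ¬ NullHomotopic M.σ M.α [d]

/-- No homotopic multiple edges: two parallel edges never bound a disk. -/
def NoHomotopicMultiEdges : Prop :=
  ∀ d d' : M.D, M.SameVertex d d' → M.SameVertex (M.α d) (M.α d') →
    NullHomotopic M.σ M.α [d, M.α d'] → d' = d ∨ d' = M.α d

/-- A toroidal map: a map on the torus (Euler characteristic 0) without
contractible loop nor homotopic multiple edges. -/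
def IsToroidal : Prop := M.eulerChar = 0 ∧ M.NoContractibleLoop ∧ M.NoHomotopicMultiEdges

/-- A triangulation: every face has size three. -/
def IsTriangulation : Prop := ∀ d, (M.facePerm ^ 3) d = d ∧ M.facePerm d ≠ d

/-- A simple map: no loops and no multiple edges. -/
def Simple : Prop :=
  (∀ d : M.D, ¬ M.SameVertex d (M.α d)) ∧
    ∀ d d' : M.D, M.SameVertex d d' → M.SameVertex (M.α d) (M.α d') → d' = d ∨ d' = M.α d

/-- The pairing between a flow of `M` and a flow of its dual (the dual dart of
a dart being itself); this is twice the `β` of the paper, which is harmless. -/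
def beta (p q : M.D → ℤ) : ℤ := ∑ d : M.D, p d * q d

/-- The characteristic flow of an oriented subgraph given by a set of darts. -/
def setFlow (S : Set M.D) : M.D → ℤ := fun d =>
  (if d ∈ S then (1 : ℤ) else 0) - (if M.α d ∈ S then 1 else 0)

/-- The darts that are outgoing (in some colour) in a Schnyder wood: the
orientation of the map associated with the Schnyder wood. -/
def outSet (lab : M.D → ZMod 3) : Set M.D := {d | ∃ i, OutDart M.σ lab i d}

/-- The angle labelling of the dual Schnyder wood (the corner of the dual dart
`d` is the corner of `M` labelled by `facePerm d`). -/
def dualLab (lab : M.D → ZMod 3) : M.D → ZMod 3 := fun d => lab (M.facePerm d)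

/-! #### The primal–dual completion `Ĝ` and its orientations

The edges of `Ĝ` are indexed by `M.D × Bool` : `(d, false)` joins the tail
vertex of `d` to the edge-vertex of the edge of `d`, and `(d, true)` joins the
face on the left of `d` to this edge-vertex.  An orientation of `Ĝ` assigns
`true` to an edge when it is oriented from the primal/dual vertex towards the
edge-vertex (an "out-edge"). -/

/-- The orientation of `Ĝ` associated with an angle labelling: an edge of `Ĝ`
is an out-edge exactly when, crossing it counterclockwise around its
primal/dual vertex, the corner label increases by one. -/
def labOrientation (lab : M.D → ZMod 3) : M.D × Bool → Bool := fun x =>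
  if x.2 = false then (if lab x.1 = lab (M.σ⁻¹ x.1) + 1 then true else false)
  else (if lab (M.facePerm x.1) = lab x.1 + 1 then true else false)

/-- A Schnyder orientation of `Ĝ`: an orientation corresponding to a Schnyder
(EDGE) labelling of `M`. -/
def IsSchnyderOrientation (o : M.D × Bool → Bool) : Prop :=
  ∃ lab : M.D → ZMod 3, IsSchnyderLabeling M.σ M.α lab ∧ o = M.labOrientation lab

def outdegPrimal (o : M.D × Bool → Bool) (d0 : M.D) : ℕ :=
  Nat.card {d : M.D // M.SameVertex d0 d ∧ o (d, false) = true}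

def outdegDual (o : M.D × Bool → Bool) (d0 : M.D) : ℕ :=
  Nat.card {d : M.D // M.SameFace d0 d ∧ o (d, true) = true}

def outdegEdge (o : M.D × Bool → Bool) (d0 : M.D) : ℕ :=
  (if o (d0, false) = false then 1 else 0) + (if o (M.α d0, false) = false then 1 else 0) +
    (if o (d0, true) = false then 1 else 0) + (if o (M.α d0, true) = false then 1 else 0)

/-- A `mod₃`-orientation of `Ĝ`: primal- and dual-vertices have outdegree
divisible by 3, edge-vertices have outdegree `1 mod 3`. -/
def IsMod3Orientation (o : M.D × Bool → Bool) : Prop :=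
  (∀ d0, 3 ∣ M.outdegPrimal o d0) ∧ (∀ d0, 3 ∣ M.outdegDual o d0) ∧
    ∀ d0, M.outdegEdge o d0 % 3 = 1

/-- `γ(C)` for a cycle `C` of `M`: the number of edges of `Ĝ` leaving `Ĉ` on
its right minus the number of edges of `Ĝ` leaving `Ĉ` on its left. -/
def gammaPDC (o : M.D × Bool → Bool) (C : M.ClosedWalk) : ℤ :=
  (∑ k : Fin C.n, ∑ d : M.D,
      ((if ccwSector M.σ (M.α (C.darts (cyclicPrev C.pos k))) (C.darts k) d ∧
            o (d, false) = true then (1 : ℤ) else 0) -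
        (if ccwSector M.σ (C.darts k) (M.α (C.darts (cyclicPrev C.pos k))) d ∧
            o (d, false) = true then 1 else 0))) +
    ∑ k : Fin C.n,
      ((if o (M.α (C.darts k), true) = false then (1 : ℤ) else 0) -
        (if o (C.darts k, true) = false then 1 else 0))

/-- A Schnyder wood is balanced when `γ(C) = 0` for every non-contractible
cycle `C` of the map. -/
def BalancedLab (lab : M.D → ZMod 3) : Prop :=
  ∀ C : M.ClosedWalk, C.IsCycle → ¬ M.FlowContractible C →
    M.gammaPDC (M.labOrientation lab) C = 0

/-- `γ(C)` with respect to an orientation of the edges of `M` itself (the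
simplified form of `γ` for triangulations): number of edges of `M` leaving `C`
on its right minus the number leaving `C` on its left. -/
def gammaSet (A : Set M.D) (C : M.ClosedWalk) : ℤ :=
  ∑ k : Fin C.n, ∑ d : M.D,
    ((if ccwSector M.σ (M.α (C.darts (cyclicPrev C.pos k))) (C.darts k) d ∧ d ∈ A
        then (1 : ℤ) else 0) -
      (if ccwSector M.σ (C.darts k) (M.α (C.darts (cyclicPrev C.pos k))) d ∧ d ∈ A
        then 1 else 0))

/-- Balanced Schnyder wood of a toroidal triangulation (via the simplified
`γ` on the edges of `M`). -/
def BalancedTri (lab : M.D → ZMod 3) : Prop :=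
  ∀ C : M.ClosedWalk, C.IsCycle → ¬ M.FlowContractible C →
    M.gammaSet (M.outSet lab) C = 0

/-! #### Orientations of the map itself -/

/-- An orientation of the edges of `M` (one dart chosen per edge). -/
def IsOrientation (A : Set M.D) : Prop := ∀ d, d ∈ A ↔ M.α d ∉ A

/-- The characteristic flow of `D \ D'` for two orientations `A, A'`. -/
def orientDiffFlow (A A' : Set M.D) : M.D → ℤ := fun d =>
  if d ∈ A ∧ d ∉ A' then 1 else if d ∉ A ∧ d ∈ A' then -1 else 0

/-- A `0`-homologous flow is counterclockwise with respect to the face `f0`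
(given by one of its darts) when it is a combination with nonnegative
coefficients of the facial flows of the faces different from `f0`. -/
def CCWFlow (f0 : M.D) (t : M.D → ℤ) : Prop :=
  ∃ c : M.D → ℕ, (∀ d, M.SameFace d f0 → c d = 0) ∧
    t = ∑ d : M.D, (c d : ℤ) • faceFlow M.σ M.α d

def outAt (A : Set M.D) (d0 : M.D) : ℕ :=
  Nat.card {d : M.D // M.SameVertex d0 d ∧ d ∈ A}

/-- A 3-orientation: every vertex has outdegree exactly 3. -/
def IsThreeOrientation (A : Set M.D) : Prop :=
  M.IsOrientation A ∧ ∀ d0, M.outAt A d0 = 3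

/-! #### Middle walks and middle cycles -/

/-- In a 3-orientation `A`, `b` is the middle outgoing edge after `d`: it
leaves the head of `d`, with exactly one outgoing dart strictly on each side of
the path `d, b`. -/
def IsMiddleSucc (A : Set M.D) (d b : M.D) : Prop :=
  b ∈ A ∧ M.σ.SameCycle (M.α d) b ∧
    Nat.card {x : M.D // x ∈ A ∧ ccwSector M.σ (M.α d) b x} = 1 ∧
    Nat.card {x : M.D // x ∈ A ∧ ccwSector M.σ b (M.α d) x} = 1

/-- The middle walk: an infinite sequence of darts, each followed by the middle
outgoing edge at its head. -/
def IsMiddleWalk (A : Set M.D) (w : ℕ → M.D) : Prop :=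
  w 0 ∈ A ∧ ∀ n, M.IsMiddleSucc A (w n) (w (n + 1))

/-- A middle cycle: a directed cycle such that every vertex on it has exactly
one edge leaving on the left of the cycle (and hence exactly one on the
right). -/
def IsMiddleCycle (A : Set M.D) (C : M.ClosedWalk) : Prop :=
  C.IsCycle ∧ (∀ k, C.darts k ∈ A) ∧
    ∀ k, Nat.card {x : M.D // x ∈ A ∧
        ccwSector M.σ (C.darts (cyclicNext C.pos k)) (M.α (C.darts k)) x} = 1 ∧
      Nat.card {x : M.D // x ∈ A ∧
        ccwSector M.σ (M.α (C.darts k)) (C.darts (cyclicNext C.pos k)) x} = 1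

end CombMap

/-! ### Universal covers -/

/-- A universal cover of the map `M`: a connected, simply connected covering of
(maps given by) rotation systems.  `p` commutes with the rotations, is a local
bijection on vertices, the cover is connected, and every closed walk of the
cover is null-homotopic (simple connectivity). -/
structure UniversalCover (M : CombMap) where
  Dc : Type
  σ' : Equiv.Perm Dc
  α' : Equiv.Perm Dc
  α'_invol : ∀ x, α' (α' x) = x
  p : Dc → M.D
  p_surj : Function.Surjective p
  p_σ : ∀ x, p (σ' x) = M.σ (p x)
  p_α : ∀ x, p (α' x) = M.α (p x)
  locInj : ∀ x y, σ'.SameCycle x y → p x = p y → x = y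
  connected : ∀ x y, Relation.EqvGen (fun a b => b = σ' a ∨ b = α' a) x y
  simplyConnected : ∀ W : CWalk σ' α', NullHomotopic σ' α' W.toList

/-- A set of darts closed under the vertex rotation: a set of vertices. -/
def VertexClosed {X : Type*} (σ : Equiv.Perm X) (A : Set X) : Prop :=
  ∀ x y, σ.SameCycle x y → (x ∈ A ↔ y ∈ A)

/-- The set of darts meets at most two vertices. -/
def AtMostTwoVertexClasses {X : Type*} (σ : Equiv.Perm X) (A : Set X) : Prop :=
  ∃ a b : X, ∀ x ∈ A, σ.SameCycle x a ∨ σ.SameCycle x b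

/-- Reachability in the graph of the map avoiding the vertices of `A`. -/
def ReachAvoiding {X : Type*} (σ α : Equiv.Perm X) (A : Set X) : X → X → Prop :=
  Relation.EqvGen fun u v => u ∉ A ∧ v ∉ A ∧ (v = σ u ∨ v = α u)

/-- 3-connectivity of the graph of a (possibly infinite) rotation system: at
least four vertices, and removing any (at most) two vertices leaves it
connected. -/
def ThreeConnectedMap {X : Type*} (σ α : Equiv.Perm X) : Prop :=
  (∃ a b c d : X, ¬σ.SameCycle a b ∧ ¬σ.SameCycle a c ∧ ¬σ.SameCycle a d ∧
      ¬σ.SameCycle b c ∧ ¬σ.SameCycle b d ∧ ¬σ.SameCycle c d) ∧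
    ∀ A : Set X, VertexClosed σ A → AtMostTwoVertexClasses σ A →
      ∀ x y, x ∉ A → y ∉ A → ReachAvoiding σ α A x y

/-- A map is essentially 3-connected when its universal cover is 3-connected. -/
def CombMap.EssentiallyThreeConnected (M : CombMap) : Prop :=
  ∀ U : UniversalCover M, ThreeConnectedMap U.σ' U.α'

/-! ### Miscellaneous helpers -/

/-- The order relation of a distributive lattice structure. -/
def distribLE {T : Type*} (inst : DistribLattice T) : T → T → Prop :=
  (inst.toLattice.toSemilatticeSup.toPartialOrder.toPreorder.toLE).le

/-- The strict order relation of a linear order structure. -/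
def linLT {T : Type*} (L : LinearOrder T) : T → T → Prop :=
  (L.toPartialOrder.toPreorder.toLT).lt

/-- A basic toroidal map: a non-contractible cycle on `n + 1` vertices together
with `n + 1` homologous non-contractible loops, one at each vertex.  Around the
vertex `x`, the counterclockwise order of the darts is: `(x,0)` towards the
next vertex on the cycle, `(x,1)` the loop leaving, `(x,2)` towards the
previous vertex, `(x,3)` the loop returning. -/
def CombMap.IsBasic (M : CombMap) : Prop :=
  ∃ (n : ℕ) (e : M.D ≃ ZMod (n + 1) × Fin 4),
    (∀ (x : ZMod (n + 1)) (j : Fin 4), e (M.σ (e.symm (x, j))) = (x, j + 1)) ∧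
      ∀ x : ZMod (n + 1),
        e (M.α (e.symm (x, 0))) = (x + 1, 2) ∧
        e (M.α (e.symm (x, 2))) = (x - 1, 0) ∧
        e (M.α (e.symm (x, 1))) = (x, 3) ∧
        e (M.α (e.symm (x, 3))) = (x, 1)


/-- The facial flows of the primal–dual completion `Ĝ` : the face of `Ĝ`
corresponding to the corner of dart `d0` is the quadrangle with boundary edges
`(d0,false)`, `(σ d0, false)`, `(d0,true)`, `(α (σ d0), true)`, traversed
counterclockwise. -/
def CombMap.pdcFaceFlow (M : CombMap) (d0 : M.D) : M.D × Bool → ℤ := fun x =>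
  (if x = (d0, false) then (1 : ℤ) else 0) - (if x = (M.σ d0, false) then 1 else 0)
    - (if x = (d0, true) then 1 else 0) + (if x = (M.α (M.σ d0), true) then 1 else 0)

def CombMap.pdcFacialSubgroup (M : CombMap) : AddSubgroup (M.D × Bool → ℤ) :=
  AddSubgroup.closure (Set.range M.pdcFaceFlow)

/-- The characteristic flow of `T = D \ D'` for two orientations of `Ĝ`
(reference orientation of the edges of `Ĝ` : towards the edge-vertex). -/
def CombMap.pdcDiff (M : CombMap) (o o' : M.D × Bool → Bool) : M.D × Bool → ℤ := fun x =>
  if o x = o' x then 0 else if o x = true then 1 else -1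

def restrictFlow {Y : Type*} (t : Y → ℤ) (S : Set Y) : Y → ℤ := fun x =>
  if x ∈ S then t x else 0

/-- An (oriented sub)flow of `Ĝ` is Eulerian: balanced at every primal-,
dual- and edge-vertex. -/
def CombMap.PDCEulerian (M : CombMap) (t : M.D × Bool → ℤ) : Prop :=
  (∀ d0 : M.D, (∑ d : M.D, if M.SameVertex d0 d then t (d, false) else 0) = 0) ∧
    (∀ d0 : M.D, (∑ d : M.D, if M.SameFace d0 d then t (d, true) else 0) = 0) ∧
    ∀ d : M.D, t (d, false) + t (M.α d, false) + t (d, true) + t (M.α d, true) = 0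

/-- `t` is partitionable: its support splits into three pairwise homologous
oriented subgraphs. -/
def CombMap.PDCPartitionable (M : CombMap) (t : M.D × Bool → ℤ) : Prop :=
  ∃ S0 S1 S2 : Set (M.D × Bool),
    (∀ x, t x ≠ 0 ↔ x ∈ S0 ∪ S1 ∪ S2) ∧
    Disjoint S0 S1 ∧ Disjoint S0 S2 ∧ Disjoint S1 S2 ∧
    restrictFlow t S0 - restrictFlow t S1 ∈ M.pdcFacialSubgroup ∧
    restrictFlow t S0 - restrictFlow t S2 ∈ M.pdcFacialSubgroup ∧
    restrictFlow t S1 - restrictFlow t S2 ∈ M.pdcFacialSubgroup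

/-- `t` is Eulerian-partitionable: as above, with the three parts moreover
Eulerian. -/
def CombMap.PDCEulerianPartitionable (M : CombMap) (t : M.D × Bool → ℤ) : Prop :=
  ∃ S0 S1 S2 : Set (M.D × Bool),
    (∀ x, t x ≠ 0 ↔ x ∈ S0 ∪ S1 ∪ S2) ∧
    Disjoint S0 S1 ∧ Disjoint S0 S2 ∧ Disjoint S1 S2 ∧
    restrictFlow t S0 - restrictFlow t S1 ∈ M.pdcFacialSubgroup ∧
    restrictFlow t S0 - restrictFlow t S2 ∈ M.pdcFacialSubgroup ∧
    restrictFlow t S1 - restrictFlow t S2 ∈ M.pdcFacialSubgroup ∧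
    M.PDCEulerian (restrictFlow t S0) ∧ M.PDCEulerian (restrictFlow t S1) ∧
    M.PDCEulerian (restrictFlow t S2)

/-- Two orientations of `Ĝ` have the same outdegrees. -/
def CombMap.SameOutdegrees (M : CombMap) (o o' : M.D × Bool → Bool) : Prop :=
  (∀ d0, M.outdegPrimal o d0 = M.outdegPrimal o' d0) ∧
    (∀ d0, M.outdegDual o d0 = M.outdegDual o' d0) ∧
    ∀ d0, M.outdegEdge o d0 = M.outdegEdge o' d0

/-! ### Auxiliary development for Statement 5 -/

section Aux

theorem Equiv.Perm.apply_inv_self {α : Type*} (f : Equiv.Perm α) (x : α) : f (f⁻¹ x) = x :=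
  f.apply_symm_apply x

theorem Equiv.Perm.inv_apply_self {α : Type*} (f : Equiv.Perm α) (x : α) : f⁻¹ (f x) = x :=
  f.symm_apply_apply x

theorem Equiv.Perm.sameCycle_inv_apply_right {α : Type*} {f : Equiv.Perm α} {x y : α} :
    f.SameCycle x (f⁻¹ y) ↔ f.SameCycle x y :=
  Equiv.Perm.sameCycle_symm_apply_right

theorem rtg_symm {α : Type*} {r : α → α → Prop} (h : Symmetric r) {a b : α}
    (hab : Relation.ReflTransGen r a b) : Relation.ReflTransGen r b a := by
  haveI : Std.Symm r := ⟨fun _ _ hh => h hh⟩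
  exact Std.Symm.symm _ _ hab

open Finset

variable {M : CombMap}

/-- `0/1` value of a boolean. -/
def bti (b : Bool) : ℤ := if b then 1 else 0

lemma pdcDiff_eq (M : CombMap) (o o' : M.D × Bool → Bool) (x : M.D × Bool) :
    M.pdcDiff o o' x = bti (o x) - bti (o' x) := by
  unfold CombMap.pdcDiff bti
  cases h : o x <;> cases h' : o' x <;> simp [h, h']

lemma pdcDiff_val (M : CombMap) (o o' : M.D × Bool → Bool) (x : M.D × Bool) :
    M.pdcDiff o o' x = 1 ∨ M.pdcDiff o o' x = 0 ∨ M.pdcDiff o o' x = -1 := by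
  rw [pdcDiff_eq]; unfold bti
  cases o x <;> cases o' x <;> simp

lemma facePerm_apply (M : CombMap) (d : M.D) : M.facePerm d = M.σ⁻¹ (M.α d) := rfl

lemma edgePattern_raw : ∀ x : Fin 4 → ZMod 3,
    ((∀ k, x k = x 0) ∨
      ∃ i : ZMod 3, ∃ j : Fin 4, x j = i - 1 ∧ x (j + 1) = i ∧ x (j + 2) = i ∧ x (j + 3) = i + 1) ↔
    ∀ j : Fin 4, x (j + 1) - x j = 0 ∨ x (j + 1) - x j = 1 := by decide

/-- The clean characterization of Schnyder (EDGE) labelings. -/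
lemma edgePattern_iff (x : Fin 4 → ZMod 3) :
    edgePattern x ↔ ∀ j : Fin 4, x (j + 1) - x j = 0 ∨ x (j + 1) - x j = 1 :=
  edgePattern_raw x

/-- The step form of the Schnyder labeling condition. -/
def CombMap.SLab (M : CombMap) (lab : M.D → ZMod 3) : Prop :=
  ∀ d, (lab d - lab (M.σ⁻¹ d) = 0 ∨ lab d - lab (M.σ⁻¹ d) = 1) ∧
    (lab (M.facePerm d) - lab d = 0 ∨ lab (M.facePerm d) - lab d = 1)

lemma isSchnyderLabeling_iff_slab (M : CombMap) (lab : M.D → ZMod 3) :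
    IsSchnyderLabeling M.σ M.α lab ↔ M.SLab lab := by
  constructor
  · intro h d
    have hd := (edgePattern_iff _).1 (h d)
    constructor
    · have h3 := hd 3
      rw [show (3 : Fin 4) + 1 = 0 by decide] at h3
      exact h3
    · have h0 := hd 0
      rw [show (0 : Fin 4) + 1 = 1 by decide] at h0
      exact h0
  · intro h d
    apply (edgePattern_iff _).2
    intro j
    fin_cases j
    · show lab (M.σ⁻¹ (M.α d)) - lab d = 0 ∨ lab (M.σ⁻¹ (M.α d)) - lab d = 1
      exact (h d).2
    · show lab (M.α d) - lab (M.σ⁻¹ (M.α d)) = 0 ∨ lab (M.α d) - lab (M.σ⁻¹ (M.α d)) = 1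
      exact (h (M.α d)).1
    · have h2 := (h (M.α d)).2
      rw [facePerm_apply, M.α_invol] at h2
      show lab (M.σ⁻¹ d) - lab (M.α d) = 0 ∨ lab (M.σ⁻¹ d) - lab (M.α d) = 1
      exact h2
    · show lab d - lab (M.σ⁻¹ d) = 0 ∨ lab d - lab (M.σ⁻¹ d) = 1
      exact (h d).1

/-- The label increment across an edge of `Ĝ` of primal type. -/
lemma lab_step_false (M : CombMap) (lab : M.D → ZMod 3)
    (hlab : IsSchnyderLabeling M.σ M.α lab) (d : M.D) :
    lab d - lab (M.σ⁻¹ d) = ((bti (M.labOrientation lab (d, false)) : ℤ) : ZMod 3) := by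
  have h := ((isSchnyderLabeling_iff_slab M lab).1 hlab d).1
  by_cases hc : lab d = lab (M.σ⁻¹ d) + 1
  · have hb : M.labOrientation lab (d, false) = true := by
      simp [CombMap.labOrientation, hc]
    rw [hb]; unfold bti; norm_num; linear_combination hc
  · have hb : M.labOrientation lab (d, false) = false := by
      simp [CombMap.labOrientation, hc]; exact hc
    rw [hb]; unfold bti; norm_num
    rcases h with h | h
    · exact h
    · exact absurd (by linear_combination h) hc

lemma lab_step_true (M : CombMap) (lab : M.D → ZMod 3)
    (hlab : IsSchnyderLabeling M.σ M.α lab) (d : M.D) :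
    lab (M.facePerm d) - lab d = ((bti (M.labOrientation lab (d, true)) : ℤ) : ZMod 3) := by
  have h := ((isSchnyderLabeling_iff_slab M lab).1 hlab d).2
  by_cases hc : lab (M.facePerm d) = lab d + 1
  · have hb : M.labOrientation lab (d, true) = true := by
      simp [CombMap.labOrientation, hc]
    rw [hb]; unfold bti; norm_num; linear_combination hc
  · have hb : M.labOrientation lab (d, true) = false := by
      simp [CombMap.labOrientation, hc]
    rw [hb]; unfold bti; norm_num
    rcases h with h | h
    · exact h
    · exact absurd (by linear_combination h) hc

/-- The coboundary of a "corner potential". -/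
def CombMap.cob (M : CombMap) (c : M.D → ℤ) : M.D × Bool → ℤ := fun x =>
  if x.2 = false then c x.1 - c (M.σ⁻¹ x.1) else c (M.facePerm x.1) - c x.1

lemma cob_false (M : CombMap) (c : M.D → ℤ) (d : M.D) :
    M.cob c (d, false) = c d - c (M.σ⁻¹ d) := rfl

lemma cob_true (M : CombMap) (c : M.D → ℤ) (d : M.D) :
    M.cob c (d, true) = c (M.facePerm d) - c d := by
  simp [CombMap.cob]

lemma cob_add (M : CombMap) (c c' : M.D → ℤ) : M.cob (c + c') = M.cob c + M.cob c' := by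
  funext x; rcases x with ⟨d, b⟩; cases b <;> simp [CombMap.cob] <;> ring

lemma cob_neg (M : CombMap) (c : M.D → ℤ) : M.cob (-c) = - M.cob c := by
  funext x; rcases x with ⟨d, b⟩; cases b <;> simp [CombMap.cob] <;> ring

lemma cob_zero (M : CombMap) : M.cob 0 = 0 := by
  funext x; rcases x with ⟨d, b⟩; cases b <;> simp [CombMap.cob]

lemma pdcFaceFlow_apply_false (M : CombMap) (d e : M.D) :
    M.pdcFaceFlow d (e, false) = (if e = d then 1 else 0) - (if M.σ⁻¹ e = d then 1 else 0) := by
  unfold CombMap.pdcFaceFlow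
  have h1 : ((e, false) = ((d, false) : M.D × Bool)) ↔ (e = d) := by simp
  have h2 : ((e, false) = ((M.σ d, false) : M.D × Bool)) ↔ (M.σ⁻¹ e = d) := by
    simp only [Prod.mk.injEq, and_true]
    constructor
    · rintro rfl; simp
    · rintro rfl; simp
  have h3 : ((e, false) = ((d, true) : M.D × Bool)) ↔ False := by simp
  have h4 : ((e, false) = ((M.α (M.σ d), true) : M.D × Bool)) ↔ False := by simp
  rw [if_congr h1 rfl rfl, if_congr h2 rfl rfl, if_congr h3 rfl rfl, if_congr h4 rfl rfl]
  simp

lemma pdcFaceFlow_apply_true (M : CombMap) (d e : M.D) :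
    M.pdcFaceFlow d (e, true) = (if M.facePerm e = d then 1 else 0) - (if e = d then 1 else 0) := by
  unfold CombMap.pdcFaceFlow
  have h1 : ((e, true) = ((d, false) : M.D × Bool)) ↔ False := by simp
  have h2 : ((e, true) = ((M.σ d, false) : M.D × Bool)) ↔ False := by simp
  have h3 : ((e, true) = ((d, true) : M.D × Bool)) ↔ (e = d) := by simp
  have h4 : ((e, true) = ((M.α (M.σ d), true) : M.D × Bool)) ↔ (M.facePerm e = d) := by
    simp only [Prod.mk.injEq, and_true]
    rw [facePerm_apply]
    constructor
    · rintro rfl; rw [M.α_invol]; simp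
    · rintro rfl; simp [M.α_invol]
  rw [if_congr h1 rfl rfl, if_congr h2 rfl rfl, if_congr h3 rfl rfl, if_congr h4 rfl rfl]
  simp; ring

lemma pdcFaceFlow_eq_cob (M : CombMap) (d0 : M.D) :
    M.pdcFaceFlow d0 = M.cob (fun d => if d = d0 then 1 else 0) := by
  funext x; rcases x with ⟨e, b⟩
  cases b
  · rw [pdcFaceFlow_apply_false, cob_false]
  · rw [pdcFaceFlow_apply_true, cob_true]

lemma cob_mem_facial (M : CombMap) (c : M.D → ℤ) : M.cob c ∈ M.pdcFacialSubgroup := by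
  have hrepr : M.cob c = ∑ d : M.D, c d • M.pdcFaceFlow d := by
    funext x
    rw [Finset.sum_apply]
    rcases x with ⟨e, b⟩
    cases b
    · rw [cob_false]
      have hpt : ∀ d : M.D, (c d • M.pdcFaceFlow d) (e, false)
          = (if e = d then c d else 0) - (if M.σ⁻¹ e = d then c d else 0) := by
        intro d
        rw [Pi.smul_apply, pdcFaceFlow_apply_false, smul_eq_mul]
        split_ifs with h h' h'' <;> ring
      rw [Finset.sum_congr rfl (fun d _ => hpt d), Finset.sum_sub_distrib]
      rw [Finset.sum_ite_eq, Finset.sum_ite_eq]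
      simp
    · rw [cob_true]
      have hpt : ∀ d : M.D, (c d • M.pdcFaceFlow d) (e, true)
          = (if M.facePerm e = d then c d else 0) - (if e = d then c d else 0) := by
        intro d
        rw [Pi.smul_apply, pdcFaceFlow_apply_true, smul_eq_mul]
        split_ifs with h h' h'' <;> ring
      rw [Finset.sum_congr rfl (fun d _ => hpt d), Finset.sum_sub_distrib]
      rw [Finset.sum_ite_eq, Finset.sum_ite_eq]
      simp
  rw [hrepr]
  exact sum_mem fun d _ => AddSubgroup.zsmul_mem _
    (AddSubgroup.subset_closure (Set.mem_range_self d)) _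

/-- The subgroup of coboundaries. -/
def cobSubgroup (M : CombMap) : AddSubgroup (M.D × Bool → ℤ) where
  carrier := Set.range M.cob
  add_mem' := by rintro _ _ ⟨c, rfl⟩ ⟨c', rfl⟩; exact ⟨c + c', cob_add M c c'⟩
  zero_mem' := ⟨0, cob_zero M⟩
  neg_mem' := by rintro _ ⟨c, rfl⟩; exact ⟨-c, cob_neg M c⟩

lemma mem_facial_iff_cob (M : CombMap) (t : M.D × Bool → ℤ) :
    t ∈ M.pdcFacialSubgroup ↔ ∃ c : M.D → ℤ, t = M.cob c := by
  constructor
  · intro ht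
    have hle : M.pdcFacialSubgroup ≤ cobSubgroup M := by
      rw [CombMap.pdcFacialSubgroup, AddSubgroup.closure_le]
      rintro _ ⟨d0, rfl⟩
      exact ⟨fun d => if d = d0 then 1 else 0, (pdcFaceFlow_eq_cob M d0).symm⟩
    obtain ⟨c, hc⟩ := hle ht
    exact ⟨c, hc.symm⟩
  · rintro ⟨c, rfl⟩; exact cob_mem_facial M c

end Aux


section Aux2

open Finset

/-- Summing an `if` over a fintype equals summing over the subtype. -/
lemma sum_if_subtype {D : Type*} [Fintype D] (P : D → Prop) [DecidablePred P] (f : D → ℤ) :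
    ∑ d : D, (if P d then f d else 0) = ∑ k : {d // P d}, f k.val := by
  classical
  rw [← Finset.sum_filter]
  exact Finset.sum_subtype (p := P) (Finset.filter (fun a => P a) Finset.univ) (by simp) f

/-- The winding-number lemma: a cyclic structure of `±1` steps on `ℤ/3` that is
globally balanced crosses each gate a net zero number of times. -/
lemma winding {K : Type*} [Fintype K] (e : K ≃ K) (y : K → ZMod 3) (s : K → ℤ)
    (h : ∀ k, (s k = 0 ∧ y (e k) = y k) ∨ (s k = 1 ∧ y (e k) = y k + 1) ∨
      (s k = -1 ∧ y (e k) = y k - 1))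
    (hsum : ∑ k, s k = 0) (i : ZMod 3) :
    ∑ k, (if s k = 1 ∧ y k = i then (1:ℤ) else if s k = -1 ∧ y (e k) = i then -1 else 0)
      = 0 := by
  classical
  set N : ZMod 3 → ℤ := fun i' => ∑ k,
    (if s k = 1 ∧ y k = i' then (1:ℤ) else if s k = -1 ∧ y (e k) = i' then -1 else 0) with hN
  have key : ∀ i', N i' = N (i' + 1) := by
    intro i'
    have tele : ∑ k, ((if y (e k) = i' + 1 then (1:ℤ) else 0)
        - (if y k = i' + 1 then 1 else 0)) = 0 := by
      rw [Finset.sum_sub_distrib, Equiv.sum_comp e (fun k => if y k = i' + 1 then (1:ℤ) else 0)]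
      ring
    have hpt : ∀ k,
        (if s k = 1 ∧ y k = i' then (1:ℤ) else if s k = -1 ∧ y (e k) = i' then -1 else 0)
        - (if s k = 1 ∧ y k = i' + 1 then 1 else if s k = -1 ∧ y (e k) = i' + 1 then -1 else 0)
        = (if y (e k) = i' + 1 then 1 else 0) - (if y k = i' + 1 then 1 else 0) := by
      intro k
      rcases h k with ⟨h0, hy⟩ | ⟨h1, hy⟩ | ⟨h1, hy⟩
      · rw [h0, hy]; norm_num
      · rw [h1, hy]
        have : ∀ a c : ZMod 3,
            ((if (1:ℤ) = 1 ∧ a = c then (1:ℤ) else if (1:ℤ) = -1 ∧ a + 1 = c then -1 else 0)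
            - (if (1:ℤ) = 1 ∧ a = c + 1 then 1 else if (1:ℤ) = -1 ∧ a + 1 = c + 1 then -1 else 0))
            = (if a + 1 = c + 1 then 1 else 0) - (if a = c + 1 then 1 else 0) := by decide
        exact this (y k) i'
      · rw [h1, hy]
        have : ∀ a c : ZMod 3,
            ((if (-1:ℤ) = 1 ∧ a = c then (1:ℤ) else if (-1:ℤ) = -1 ∧ a - 1 = c then -1 else 0)
            - (if (-1:ℤ) = 1 ∧ a = c + 1 then 1 else if (-1:ℤ) = -1 ∧ a - 1 = c + 1 then -1 else 0))
            = (if a - 1 = c + 1 then 1 else 0) - (if a = c + 1 then 1 else 0) := by decide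
        exact this (y k) i'
    have hdiff : N i' - N (i' + 1) = 0 := by
      rw [hN, ← Finset.sum_sub_distrib, Finset.sum_congr rfl (fun k _ => hpt k)]
      exact tele
    linarith
  have key3 : N i + N (i + 1) + N (i + 1 + 1) = ∑ k, s k := by
    rw [hN, ← Finset.sum_add_distrib, ← Finset.sum_add_distrib]
    apply Finset.sum_congr rfl
    intro k _
    rcases h k with ⟨h0, hy⟩ | ⟨h1, hy⟩ | ⟨h1, hy⟩
    · rw [h0, hy]; norm_num
    · rw [h1, hy]
      have : ∀ a c : ZMod 3,
          ((if (1:ℤ) = 1 ∧ a = c then (1:ℤ) else if (1:ℤ) = -1 ∧ a + 1 = c then -1 else 0)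
          + (if (1:ℤ) = 1 ∧ a = c + 1 then 1 else if (1:ℤ) = -1 ∧ a + 1 = c + 1 then -1 else 0)
          + (if (1:ℤ) = 1 ∧ a = c + 1 + 1 then 1
              else if (1:ℤ) = -1 ∧ a + 1 = c + 1 + 1 then -1 else 0)) = 1 := by decide
      exact this (y k) i
    · rw [h1, hy]
      have : ∀ a c : ZMod 3,
          ((if (-1:ℤ) = 1 ∧ a = c then (1:ℤ) else if (-1:ℤ) = -1 ∧ a - 1 = c then -1 else 0)
          + (if (-1:ℤ) = 1 ∧ a = c + 1 then 1 else if (-1:ℤ) = -1 ∧ a - 1 = c + 1 then -1 else 0)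
          + (if (-1:ℤ) = 1 ∧ a = c + 1 + 1 then 1
              else if (-1:ℤ) = -1 ∧ a - 1 = c + 1 + 1 then -1 else 0)) = -1 := by decide
      exact this (y k) i
  have e1 := key i
  have e2 := key (i + 1)
  rw [hsum] at key3
  show N i = 0
  linarith

section Orbit

variable {D : Type*} [Fintype D]

lemma pow_fix_orbit (σ : Equiv.Perm D) {q : ℕ} {x z : D} (hfix : (σ ^ q) x = x)
    (h : σ.SameCycle x z) : (σ ^ q) z = z := by
  obtain ⟨i, hi⟩ := h
  subst hi
  have hcomm : σ ^ (q : ℤ) * σ ^ i = σ ^ i * σ ^ (q : ℤ) := by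
    rw [← zpow_add, ← zpow_add, add_comm]
  calc (σ ^ q) ((σ ^ i) x) = (σ ^ (q : ℤ) * σ ^ i) x := by rw [zpow_natCast]; rfl
    _ = (σ ^ i) ((σ ^ (q : ℤ)) x) := by rw [hcomm]; rfl
    _ = (σ ^ i) x := by rw [zpow_natCast, hfix]

lemma pow_mul_fix (σ : Equiv.Perm D) {p : ℕ} {x : D} (hfix : (σ ^ p) x = x) :
    ∀ m : ℕ, (σ ^ (p * m)) x = x := by
  intro m
  induction m with
  | zero => simp
  | succ m ih =>
    have : p * (m + 1) = p * m + p := by ring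
    rw [this, pow_add, Equiv.Perm.mul_apply, hfix, ih]

lemma pow_mod_period (σ : Equiv.Perm D) {p : ℕ} {x : D} (hfix : (σ ^ p) x = x)
    (hp : 0 < p) (k : ℕ) : (σ ^ k) x = (σ ^ (k % p)) x := by
  conv_lhs => rw [← Nat.mod_add_div k p]
  rw [pow_add, Equiv.Perm.mul_apply, pow_mul_fix σ hfix]

/-- Sum over an orbit of `σ` equals the sum over one minimal period. -/
lemma orbit_sum_eq (σ : Equiv.Perm D) (f : D → ℤ) (x : D) (p : ℕ)
    (hp : 0 < p) (hfix : (σ ^ p) x = x) (hmin : ∀ q, 0 < q → q < p → (σ ^ q) x ≠ x) :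
    (∑ d : D, if σ.SameCycle x d then f d else 0) = ∑ j ∈ Finset.range p, f ((σ ^ j) x) := by
  classical
  rw [← Finset.sum_filter]
  symm
  apply Finset.sum_bij (i := fun (j : ℕ) (_ : j ∈ Finset.range p) => (σ ^ j) x)
  · intro j _
    simp only [Finset.mem_filter, Finset.mem_univ, true_and]
    exact ⟨(j : ℤ), by rw [zpow_natCast]⟩
  · intro a ha a' ha' heq
    rw [Finset.mem_range] at ha ha'
    by_contra hne
    have key : ∀ u v : ℕ, u < v → v < p → (σ ^ u) x = (σ ^ v) x → False := by
      intro u v huv hvp heq2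
      have hz : (σ ^ (v - u)) ((σ ^ u) x) = (σ ^ u) x := by
        rw [← Equiv.Perm.mul_apply, ← pow_add, Nat.sub_add_cancel huv.le]
        exact heq2.symm
      have hx : (σ ^ (v - u)) x = x :=
        pow_fix_orbit σ hz ⟨-(u : ℤ), by rw [zpow_neg, zpow_natCast]; simp⟩
      exact hmin (v - u) (by omega) (by omega) hx
    rcases Nat.lt_or_ge a a' with h | h
    · exact key a a' h ha' heq
    · exact key a' a (by omega) ha heq.symm
  · intro d hd
    simp only [Finset.mem_filter, Finset.mem_univ, true_and] at hd
    obtain ⟨i, _, hi⟩ := hd.exists_pow_eq'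
    refine ⟨i % p, Finset.mem_range.2 (Nat.mod_lt _ hp), ?_⟩
    rw [← pow_mod_period σ hfix hp]
    exact hi
  · intro j _; rfl

end Orbit

section Potential

open Finset

variable {M : CombMap}

/-- Sum of a balanced function over any full period vanishes. -/
lemma period_sum_zero (M : CombMap) (t1 : M.D → ℤ)
    (hbal : ∀ d0 : M.D, (∑ d : M.D, if M.SameVertex d0 d then t1 d else 0) = 0)
    (x : M.D) {q : ℕ} (hq : 0 < q) (hfix : (M.σ ^ q) x = x) :
    ∑ j ∈ Finset.range q, t1 ((M.σ ^ j) x) = 0 := by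
  classical
  have hpex : ∃ p : ℕ, 0 < p ∧ (M.σ ^ p) x = x := ⟨q, hq, hfix⟩
  set p := Nat.find hpex with hp
  obtain ⟨hp0, hpfix⟩ := Nat.find_spec hpex
  have hmin : ∀ r, 0 < r → r < p → (M.σ ^ r) x ≠ x := by
    intro r hr0 hrp hfx
    exact Nat.find_min hpex hrp ⟨hr0, hfx⟩
  have hper : ∑ j ∈ Finset.range p, t1 ((M.σ ^ j) x) = 0 := by
    rw [← orbit_sum_eq M.σ t1 x p hp0 hpfix hmin]
    exact hbal x
  -- p divides q
  have hdvd : q % p = 0 := by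
    by_contra hne
    have h1 : (M.σ ^ (q % p)) x = x := by
      rw [← pow_mod_period M.σ hpfix hp0 q]; exact hfix
    exact hmin (q % p) (by omega) (Nat.mod_lt _ hp0) h1
  -- sum over range (p * m) is m copies
  have hsplit : ∀ m : ℕ, ∑ j ∈ Finset.range (p * m), t1 ((M.σ ^ j) x) = 0 := by
    intro m
    induction m with
    | zero => simp
    | succ m ih =>
      have hrw : p * (m + 1) = p * m + p := by ring
      rw [hrw, Finset.sum_range_add, ih, zero_add]
      have hpt : ∀ j, t1 ((M.σ ^ (p * m + j)) x) = t1 ((M.σ ^ j) x) := by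
        intro j
        congr 1
        rw [pow_add, Equiv.Perm.mul_apply]
        exact pow_fix_orbit M.σ (pow_mul_fix M.σ hpfix m) ⟨(j : ℤ), by rw [zpow_natCast]⟩
      rw [Finset.sum_congr rfl (fun j _ => hpt j)]
      exact hper
  have hq2 := Nat.div_add_mod q p
  rw [hdvd, add_zero] at hq2
  rw [← hq2]
  exact hsplit _

/-- Existence of a potential along each vertex orbit, given primal balance. -/
lemma exists_sigma_potential (M : CombMap) (t1 : M.D → ℤ)
    (hbal : ∀ d0 : M.D, (∑ d : M.D, if M.SameVertex d0 d then t1 d else 0) = 0) :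
    ∃ s : M.D → ℤ, ∀ d, s (M.σ d) - s d = t1 (M.σ d) := by
  classical
  let b : M.D → M.D := fun d => (Quotient.mk (permSetoid M.σ) d).out
  have hb_cyc : ∀ d, M.σ.SameCycle (b d) d := by
    intro d
    exact Quotient.exact (Quotient.out_eq (Quotient.mk (permSetoid M.σ) d))
  have hb_const : ∀ d, b (M.σ d) = b d := by
    intro d
    show (Quotient.mk (permSetoid M.σ) (M.σ d)).out = (Quotient.mk (permSetoid M.σ) d).out
    congr 1
    exact Quotient.sound (show M.σ.SameCycle (M.σ d) d from ⟨-1, by simp⟩)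
  have hex : ∀ d, ∃ k : ℕ, (M.σ ^ k) (b d) = d := by
    intro d
    obtain ⟨i, _, hi⟩ := (hb_cyc d).exists_pow_eq'
    exact ⟨i, hi⟩
  let kk : M.D → ℕ := fun d => Nat.find (hex d)
  have hkk : ∀ d, (M.σ ^ kk d) (b d) = d := fun d => Nat.find_spec (hex d)
  refine ⟨fun d => ∑ j ∈ Finset.range (kk d), t1 ((M.σ ^ (j + 1)) (b d)), ?_⟩
  intro d
  show (∑ j ∈ Finset.range (kk (M.σ d)), t1 ((M.σ ^ (j + 1)) (b (M.σ d))))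
      - (∑ j ∈ Finset.range (kk d), t1 ((M.σ ^ (j + 1)) (b d))) = t1 (M.σ d)
  by_cases hcase : M.σ d = b d
  · -- wrap-around step
    have h0 : kk (M.σ d) = 0 := by
      have h00 : (M.σ ^ 0) (b (M.σ d)) = M.σ d := by
        simp only [pow_zero, Equiv.Perm.one_apply, hb_const d]
        exact hcase.symm
      exact Nat.le_zero.1 (Nat.find_le h00)
    have hfix : (M.σ ^ (kk d + 1)) (b d) = b d := by
      rw [pow_succ', Equiv.Perm.mul_apply, hkk d, hcase]
    have hzero := period_sum_zero M t1 hbal (b d) (Nat.succ_pos _) hfix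
    rw [Finset.sum_range_succ'] at hzero
    simp only [pow_zero, Equiv.Perm.one_apply] at hzero
    have hsd : (∑ j ∈ Finset.range (kk (M.σ d)), t1 ((M.σ ^ (j + 1)) (b (M.σ d)))) = 0 := by
      rw [h0]; simp
    rw [hsd]
    have ht : t1 (M.σ d) = t1 (b d) := by rw [hcase]
    rw [ht]
    linarith
  · have hk1 : (M.σ ^ (kk d + 1)) (b (M.σ d)) = M.σ d := by
      rw [hb_const d, pow_succ', Equiv.Perm.mul_apply, hkk d]
    have hkeq : kk (M.σ d) = kk d + 1 := by
      apply le_antisymm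
      · exact Nat.find_le hk1
      · by_contra hlt
        push_neg at hlt
        have hspec : (M.σ ^ kk (M.σ d)) (b d) = M.σ d := by
          have h := hkk (M.σ d); rwa [hb_const d] at h
        rcases Nat.eq_zero_or_pos (kk (M.σ d)) with h00 | hpos
        · rw [h00] at hspec
          simp only [pow_zero, Equiv.Perm.one_apply] at hspec
          exact hcase hspec.symm
        · obtain ⟨m', hm'⟩ : ∃ m', kk (M.σ d) = m' + 1 := ⟨kk (M.σ d) - 1, by omega⟩
          rw [hm', pow_succ', Equiv.Perm.mul_apply] at hspec
          have hd' : (M.σ ^ m') (b d) = d := M.σ.injective hspec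
          exact Nat.find_min (hex d) (show m' < kk d from by omega) hd'
    rw [hb_const d, hkeq, Finset.sum_range_succ]
    have hlast : (M.σ ^ (kk d + 1)) (b d) = M.σ d := by
      rw [pow_succ', Equiv.Perm.mul_apply, hkk d]
    rw [hlast]
    ring

/-- The sum of a σ-potential's increments over a counterclockwise sector. -/
lemma sector_sum (M : CombMap) (t1 s : M.D → ℤ)
    (hs : ∀ d, s (M.σ d) - s d = t1 (M.σ d)) {x y : M.D} (hxy : M.σ.SameCycle x y) :
    (∑ d : M.D, if ccwSector M.σ x y d then t1 d else 0) = s y - t1 y - s x := by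
  classical
  have hex : ∃ k : ℕ, 0 < k ∧ (M.σ ^ k) x = y := by
    obtain ⟨i, hi0, _, hi⟩ := hxy.exists_pow_eq''
    exact ⟨i, hi0, hi⟩
  set m := Nat.find hex with hm
  obtain ⟨hm0, hmy⟩ : 0 < m ∧ (M.σ ^ m) x = y := Nat.find_spec hex
  have hchar : ∀ d, ccwSector M.σ x y d ↔ ∃ j, 0 < j ∧ j < m ∧ (M.σ ^ j) x = d := by
    intro d; constructor
    · rintro ⟨k, hk0, hkd, hall⟩
      have hkm : k < m := by
        by_contra hge; push_neg at hge
        exact hall m hm0 hge hmy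
      exact ⟨k, hk0, hkm, hkd⟩
    · rintro ⟨j, hj0, hjm, hjd⟩
      refine ⟨j, hj0, hjd, ?_⟩
      intro l hl0 hlj hly
      have : m ≤ l := Nat.find_le ⟨hl0, hly⟩
      omega
  have hsum : (∑ d : M.D, if ccwSector M.σ x y d then t1 d else 0)
      = ∑ j ∈ Finset.Ico 1 m, t1 ((M.σ ^ j) x) := by
    rw [← Finset.sum_filter]
    symm
    apply Finset.sum_bij (i := fun (j : ℕ) (_ : j ∈ Finset.Ico 1 m) => (M.σ ^ j) x)
    · intro j hj
      rw [Finset.mem_Ico] at hj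
      simp only [Finset.mem_filter, Finset.mem_univ, true_and]
      rw [hchar]
      exact ⟨j, by omega, by omega, rfl⟩
    · intro a ha a' ha' heq
      rw [Finset.mem_Ico] at ha ha'
      by_contra hne
      have key : ∀ u v : ℕ, u < v → v < m → (M.σ ^ u) x = (M.σ ^ v) x → False := by
        intro u v huv hvm heq2
        have hz : (M.σ ^ (v - u)) ((M.σ ^ u) x) = (M.σ ^ u) x := by
          rw [← Equiv.Perm.mul_apply, ← pow_add, Nat.sub_add_cancel huv.le]
          exact heq2.symm
        have hx : (M.σ ^ (v - u)) x = x :=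
          pow_fix_orbit M.σ hz ⟨-(u : ℤ), by rw [zpow_neg, zpow_natCast]; simp⟩
        have hy2 : (M.σ ^ (m - (v - u))) x = y := by
          calc (M.σ ^ (m - (v - u))) x = (M.σ ^ (m - (v - u))) ((M.σ ^ (v - u)) x) := by
                rw [hx]
            _ = (M.σ ^ m) x := by
                rw [← Equiv.Perm.mul_apply, ← pow_add]
                congr 2
                omega
            _ = y := hmy
        exact Nat.find_min hex (show m - (v - u) < m from by omega)
          ⟨show 0 < m - (v - u) from by omega, hy2⟩
      rcases Nat.lt_or_ge a a' with h | h
      · exact key a a' h ha'.2 heq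
      · exact key a' a (by omega) ha.2 heq.symm
    · intro d hd
      simp only [Finset.mem_filter, Finset.mem_univ, true_and] at hd
      rw [hchar] at hd
      obtain ⟨j, hj0, hjm, hjd⟩ := hd
      exact ⟨j, Finset.mem_Ico.2 ⟨hj0, hjm⟩, hjd⟩
    · intro j _; rfl
  rw [hsum]
  have tele : ∀ n : ℕ, ∑ j ∈ Finset.range n, t1 ((M.σ ^ (j + 1)) x) = s ((M.σ ^ n) x) - s x := by
    intro n; induction n with
    | zero => simp
    | succ n ih =>
      rw [Finset.sum_range_succ, ih]
      have hpow : (M.σ ^ (n + 1)) x = M.σ ((M.σ ^ n) x) := by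
        rw [pow_succ', Equiv.Perm.mul_apply]
      rw [hpow]
      linarith [hs ((M.σ ^ n) x)]
  have hIco : ∑ j ∈ Finset.Ico 1 m, t1 ((M.σ ^ j) x)
      = ∑ j ∈ Finset.range (m - 1), t1 ((M.σ ^ (j + 1)) x) := by
    rw [Finset.sum_Ico_eq_sum_range]
    exact Finset.sum_congr rfl (fun j _ => by rw [Nat.add_comm 1 j])
  rw [hIco, tele]
  have h1 : M.σ ((M.σ ^ (m - 1)) x) = y := by
    rw [← Equiv.Perm.mul_apply, ← pow_succ']
    rw [show m - 1 + 1 = m from by omega]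
    exact hmy
  have h2 := hs ((M.σ ^ (m - 1)) x)
  rw [h1] at h2
  linarith

end Potential

end Aux2


section Aux3

open Finset

variable {M : CombMap}

lemma next_prev {n : ℕ} (h : 0 < n) (k : Fin n) : cyclicNext h (cyclicPrev h k) = k := by
  unfold cyclicNext cyclicPrev
  apply Fin.ext
  show ((k.val + (n - 1)) % n + 1) % n = k.val
  rw [Nat.mod_add_mod, show k.val + (n - 1) + 1 = k.val + n from by omega,
    Nat.add_mod_right, Nat.mod_eq_of_lt k.isLt]

lemma prev_next {n : ℕ} (h : 0 < n) (k : Fin n) : cyclicPrev h (cyclicNext h k) = k := by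
  unfold cyclicNext cyclicPrev
  apply Fin.ext
  show ((k.val + 1) % n + (n - 1)) % n = k.val
  rw [Nat.mod_add_mod, show k.val + 1 + (n - 1) = k.val + n from by omega,
    Nat.add_mod_right, Nat.mod_eq_of_lt k.isLt]

/-- The cyclic-previous equivalence on the index set of a closed walk. -/
def eprev {n : ℕ} (h : 0 < n) : Fin n ≃ Fin n where
  toFun := cyclicPrev h
  invFun := cyclicNext h
  left_inv := next_prev h
  right_inv := prev_next h

lemma helper1 (P Q : Prop) [Decidable P] [Decidable Q] (b b' : Bool) :
    (((if P ∧ b = true then (1:ℤ) else 0) - (if Q ∧ b = true then 1 else 0))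
    - ((if P ∧ b' = true then 1 else 0) - (if Q ∧ b' = true then 1 else 0)))
    = (if P then (bti b - bti b') else 0) - (if Q then (bti b - bti b') else 0) := by
  unfold bti
  by_cases hP : P <;> by_cases hQ : Q <;> cases b <;> cases b' <;> simp [hP, hQ]

lemma helper2 (b b' : Bool) :
    ((if b = false then (1:ℤ) else 0) - (if b' = false then 1 else 0)) = -(bti b - bti b') := by
  cases b <;> cases b' <;> simp [bti]

/-- The γ-difference formula: difference of `γ` along any closed walk, in terms of the
per-dart function `τ`. -/
lemma gamma_diff (M : CombMap) (o o' : M.D × Bool → Bool) (s : M.D → ℤ)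
    (hs : ∀ d, s (M.σ d) - s d = M.pdcDiff o o' (M.σ d, false))
    (C : CWalk M.σ M.α) :
    M.gammaPDC o C - M.gammaPDC o' C
      = ∑ k : Fin C.n,
        ((M.pdcDiff o o' (C.darts k, true) + s (C.darts k) - s (M.facePerm (C.darts k)))
        - (M.pdcDiff o o' (M.α (C.darts k), true) + s (M.α (C.darts k))
            - s (M.facePerm (M.α (C.darts k))))) := by
  classical
  set T := M.pdcDiff o o' with hT
  have hfact1 : ∀ d : M.D, s (M.α d) - s (M.facePerm d) = T (M.α d, false) := by
    intro d
    have h := hs (M.facePerm d)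
    rw [facePerm_apply] at h ⊢
    rw [Equiv.Perm.apply_inv_self] at h
    exact h
  have hfact2 : ∀ d : M.D, s d - s (M.facePerm (M.α d)) = T (d, false) := by
    intro d
    have h := hs (M.σ⁻¹ d)
    rw [Equiv.Perm.apply_inv_self] at h
    rw [facePerm_apply, M.α_invol]
    exact h
  have key1 : ∀ k : Fin C.n,
      ((∑ d : M.D,
        ((if ccwSector M.σ (M.α (C.darts (cyclicPrev C.pos k))) (C.darts k) d ∧
              o (d, false) = true then (1 : ℤ) else 0) -
          (if ccwSector M.σ (C.darts k) (M.α (C.darts (cyclicPrev C.pos k))) d ∧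
              o (d, false) = true then 1 else 0)))
      - (∑ d : M.D,
        ((if ccwSector M.σ (M.α (C.darts (cyclicPrev C.pos k))) (C.darts k) d ∧
              o' (d, false) = true then (1 : ℤ) else 0) -
          (if ccwSector M.σ (C.darts k) (M.α (C.darts (cyclicPrev C.pos k))) d ∧
              o' (d, false) = true then 1 else 0))))
      = 2 * s (C.darts k) - 2 * s (M.α (C.darts (cyclicPrev C.pos k)))
        - T (C.darts k, false) + T (M.α (C.darts (cyclicPrev C.pos k)), false) := by
    intro k
    rw [← Finset.sum_sub_distrib]
    have hpt2 : ∀ d : M.D,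
        (((if ccwSector M.σ (M.α (C.darts (cyclicPrev C.pos k))) (C.darts k) d ∧
              o (d, false) = true then (1 : ℤ) else 0) -
          (if ccwSector M.σ (C.darts k) (M.α (C.darts (cyclicPrev C.pos k))) d ∧
              o (d, false) = true then 1 else 0))
        - ((if ccwSector M.σ (M.α (C.darts (cyclicPrev C.pos k))) (C.darts k) d ∧
              o' (d, false) = true then (1 : ℤ) else 0) -
          (if ccwSector M.σ (C.darts k) (M.α (C.darts (cyclicPrev C.pos k))) d ∧
              o' (d, false) = true then 1 else 0)))
        = (if ccwSector M.σ (M.α (C.darts (cyclicPrev C.pos k))) (C.darts k) d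
            then T (d, false) else 0)
          - (if ccwSector M.σ (C.darts k) (M.α (C.darts (cyclicPrev C.pos k))) d
            then T (d, false) else 0) := by
      intro d
      have h := helper1 (ccwSector M.σ (M.α (C.darts (cyclicPrev C.pos k))) (C.darts k) d)
        (ccwSector M.σ (C.darts k) (M.α (C.darts (cyclicPrev C.pos k))) d)
        (o (d, false)) (o' (d, false))
      rw [show bti (o (d, false)) - bti (o' (d, false)) = T (d, false) from
        (pdcDiff_eq M o o' (d, false)).symm] at h
      exact h
    rw [Finset.sum_congr rfl (fun d _ => hpt2 d), Finset.sum_sub_distrib]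
    have hcyc : M.σ.SameCycle (M.α (C.darts (cyclicPrev C.pos k))) (C.darts k) := by
      have h := C.chain (cyclicPrev C.pos k)
      rwa [next_prev C.pos k] at h
    rw [sector_sum M (fun d => T (d, false)) s (fun d => hs d) hcyc,
      sector_sum M (fun d => T (d, false)) s (fun d => hs d) hcyc.symm]
    ring
  have key2 : ∀ k : Fin C.n,
      (((if o (M.α (C.darts k), true) = false then (1 : ℤ) else 0) -
          (if o (C.darts k, true) = false then 1 else 0))
      - ((if o' (M.α (C.darts k), true) = false then (1 : ℤ) else 0) -
          (if o' (C.darts k, true) = false then 1 else 0)))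
      = T (C.darts k, true) - T (M.α (C.darts k), true) := by
    intro k
    have h1 := helper2 (o (M.α (C.darts k), true)) (o' (M.α (C.darts k), true))
    have h2 := helper2 (o (C.darts k, true)) (o' (C.darts k, true))
    have e1 : bti (o (M.α (C.darts k), true)) - bti (o' (M.α (C.darts k), true))
        = T (M.α (C.darts k), true) := by rw [hT, pdcDiff_eq]
    have e2 : bti (o (C.darts k, true)) - bti (o' (C.darts k, true))
        = T (C.darts k, true) := by rw [hT, pdcDiff_eq]
    linarith
  -- assemble
  unfold CombMap.gammaPDC
  rw [add_sub_add_comm]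
  rw [← Finset.sum_sub_distrib, ← Finset.sum_sub_distrib]
  rw [Finset.sum_congr rfl (fun k _ => key1 k), Finset.sum_congr rfl (fun k _ => key2 k)]
  rw [← Finset.sum_add_distrib]
  -- reindex the "prev" terms
  have hre : ∑ k : Fin C.n, (2 * s (M.α (C.darts (cyclicPrev C.pos k)))
        - T (M.α (C.darts (cyclicPrev C.pos k)), false))
      = ∑ k : Fin C.n, (2 * s (M.α (C.darts k)) - T (M.α (C.darts k), false)) := by
    exact Equiv.sum_comp (eprev C.pos) (fun k => 2 * s (M.α (C.darts k)) - T (M.α (C.darts k), false))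
  have expand : ∀ k : Fin C.n,
      (2 * s (C.darts k) - 2 * s (M.α (C.darts (cyclicPrev C.pos k)))
        - T (C.darts k, false) + T (M.α (C.darts (cyclicPrev C.pos k)), false)
        + (T (C.darts k, true) - T (M.α (C.darts k), true)))
      = (2 * s (C.darts k) - T (C.darts k, false) + (T (C.darts k, true) - T (M.α (C.darts k), true)))
        - (2 * s (M.α (C.darts (cyclicPrev C.pos k))) - T (M.α (C.darts (cyclicPrev C.pos k)), false)) := by
    intro k; ring
  rw [Finset.sum_congr rfl (fun k _ => expand k), Finset.sum_sub_distrib, hre,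
    ← Finset.sum_sub_distrib]
  apply Finset.sum_congr rfl
  intro k _
  have h1 := hfact1 (C.darts k)
  have h2 := hfact2 (C.darts k)
  linarith

/-- The pairing of a flow against a dart function, as a homomorphism. -/
def pairHom {D : Type} [Fintype D] (τ : D → ℤ) : (D → ℤ) →+ ℤ where
  toFun g := ∑ d, g d * τ d
  map_zero' := by simp
  map_add' g g' := by
    rw [← Finset.sum_add_distrib]
    exact Finset.sum_congr rfl fun d _ => by simp [Pi.add_apply]; ring

lemma pair_flow (M : CombMap) (τ : M.D → ℤ) (hanti : ∀ d, τ (M.α d) = - τ d)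
    (W : CWalk M.σ M.α) :
    pairHom τ W.flow = 2 * ∑ k : Fin W.n, τ (W.darts k) := by
  classical
  show ∑ d : M.D, W.flow d * τ d = _
  unfold CWalk.flow
  have hpt : ∀ d : M.D,
      (∑ k : Fin W.n, ((if W.darts k = d then (1:ℤ) else 0)
        - (if W.darts k = M.α d then 1 else 0))) * τ d
      = ∑ k : Fin W.n, ((if W.darts k = d then τ d else 0)
        - (if W.darts k = M.α d then τ d else 0)) := by
    intro d
    rw [Finset.sum_mul]
    exact Finset.sum_congr rfl fun k _ => by split_ifs <;> ring
  rw [Finset.sum_congr rfl (fun d _ => hpt d), Finset.sum_comm]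
  have hk : ∀ k : Fin W.n,
      (∑ d : M.D, ((if W.darts k = d then τ d else 0) - (if W.darts k = M.α d then τ d else 0)))
      = 2 * τ (W.darts k) := by
    intro k
    rw [Finset.sum_sub_distrib]
    have hcond : ∀ d : M.D, (W.darts k = M.α d) = (M.α (W.darts k) = d) := by
      intro d
      apply propext
      constructor
      · intro h; rw [h, M.α_invol]
      · intro h; rw [← h, M.α_invol]
    have h2 : (∑ d : M.D, (if W.darts k = M.α d then τ d else 0))
        = ∑ d : M.D, (if M.α (W.darts k) = d then τ d else 0) := by
      apply Finset.sum_congr rfl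
      intro d _
      rw [hcond d]
    rw [h2, Finset.sum_ite_eq, Finset.sum_ite_eq]
    simp only [Finset.mem_univ, if_pos, if_true]
    rw [hanti]
    ring
  rw [Finset.sum_congr rfl (fun k _ => hk k), ← Finset.mul_sum]

lemma pair_facial_zero (M : CombMap) (τ : M.D → ℤ) (hanti : ∀ d, τ (M.α d) = - τ d)
    (horb : ∀ d0 : M.D, (∑ d : M.D, if M.SameFace d0 d then τ d else 0) = 0) :
    ∀ f ∈ facialSubgroup M.σ M.α, pairHom τ f = 0 := by
  intro f hf
  have hle : facialSubgroup M.σ M.α ≤ (pairHom τ).ker := by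
    rw [facialSubgroup, AddSubgroup.closure_le]
    rintro _ ⟨d0, rfl⟩
    show pairHom τ (faceFlow M.σ M.α d0) = 0
    show ∑ d : M.D, faceFlow M.σ M.α d0 d * τ d = 0
    have hpt : ∀ d : M.D, faceFlow M.σ M.α d0 d * τ d
        = (if M.SameFace d0 d then τ d else 0)
          - (if M.SameFace d0 (M.α d) then τ d else 0) := by
      intro d
      unfold faceFlow
      have hIff : ∀ e : M.D, (fperm M.σ M.α).SameCycle d0 e ↔ M.SameFace d0 e :=
        fun e => Iff.rfl
      by_cases h1 : (fperm M.σ M.α).SameCycle d0 d <;>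
        by_cases h2 : (fperm M.σ M.α).SameCycle d0 (M.α d)
      · rw [if_pos h1, if_pos h2, if_pos ((hIff d).1 h1), if_pos ((hIff (M.α d)).1 h2)]; ring
      · rw [if_pos h1, if_neg h2, if_pos ((hIff d).1 h1),
          if_neg (fun hh => h2 ((hIff (M.α d)).2 hh))]; ring
      · rw [if_neg h1, if_pos h2, if_neg (fun hh => h1 ((hIff d).2 hh)),
          if_pos ((hIff (M.α d)).1 h2)]; ring
      · rw [if_neg h1, if_neg h2, if_neg (fun hh => h1 ((hIff d).2 hh)),
          if_neg (fun hh => h2 ((hIff (M.α d)).2 hh))]; ring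
    rw [Finset.sum_congr rfl (fun d _ => hpt d), Finset.sum_sub_distrib]
    have hsecond : (∑ d : M.D, if M.SameFace d0 (M.α d) then τ d else 0)
        = ∑ d : M.D, if M.SameFace d0 d then - τ d else 0 := by
      have := Equiv.sum_comp M.α (fun e => if M.SameFace d0 e then - τ e else 0)
      rw [← this]
      apply Finset.sum_congr rfl
      intro d _
      by_cases h : M.SameFace d0 (M.α d)
      · rw [if_pos h, if_pos h, hanti]; ring
      · rw [if_neg h, if_neg h]
    rw [hsecond]
    have : (∑ d : M.D, if M.SameFace d0 d then - τ d else 0)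
        = - ∑ d : M.D, if M.SameFace d0 d then τ d else 0 := by
      rw [← Finset.sum_neg_distrib]
      apply Finset.sum_congr rfl
      intro d _; split_ifs <;> simp
    rw [this, horb d0]
    norm_num
  exact hle hf

end Aux3


section Aux4

open Relation

/-- A chain of darts, consecutive darts being linked head-to-tail. -/
def VChain (M : CombMap) : M.D → List M.D → M.D → Prop
  | a, [], b => M.SameVertex a b
  | a, e :: L, b => M.SameVertex a e ∧ VChain M (M.α e) L b

lemma vchain_mono (M : CombMap) : ∀ (L : List M.D) (a b b' : M.D),
    VChain M a L b → M.SameVertex b b' → VChain M a L b'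
  | [], a, b, b', h, h' => h.trans h'
  | e :: L, a, b, b', h, h' => ⟨h.1, vchain_mono M L _ _ _ h.2 h'⟩

lemma vchain_snoc (M : CombMap) : ∀ (L : List M.D) (a b e : M.D),
    VChain M a L b → M.SameVertex b e → VChain M a (L ++ [e]) (M.α e)
  | [], a, b, e, h, h' => ⟨h.trans h', Equiv.Perm.SameCycle.refl _ _⟩
  | f :: L, a, b, e, h, h' => ⟨h.1, vchain_snoc M L _ _ _ h.2 h'⟩

lemma vchain_head (M : CombMap) : ∀ (L : List M.D) (a b : M.D), VChain M a L b →
    ∀ (h : 0 < L.length), M.SameVertex a (L.get ⟨0, h⟩)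
  | e :: L, a, b, hch, _ => hch.1
  | [], _, _, _, h => absurd h (by simp)

lemma vchain_get (M : CombMap) : ∀ (L : List M.D) (a b : M.D), VChain M a L b →
    ∀ (i : ℕ) (h1 : i < L.length) (h2 : i + 1 < L.length),
    M.SameVertex (M.α (L.get ⟨i, h1⟩)) (L.get ⟨i + 1, h2⟩)
  | e :: L, a, b, hch, 0, h1, h2 => by
      show M.SameVertex (M.α e) (L.get ⟨0, _⟩)
      exact vchain_head M L (M.α e) b hch.2 (by simpa using h2)
  | e :: L, a, b, hch, (i+1), h1, h2 => by
      show M.SameVertex (M.α (L.get ⟨i, _⟩)) (L.get ⟨i + 1, _⟩)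
      exact vchain_get M L (M.α e) b hch.2 i (by simpa using h1) (by simpa using h2)
  | [], _, _, _, i, h1, _ => absurd h1 (by simp)

lemma vchain_last (M : CombMap) : ∀ (L : List M.D) (a b : M.D), VChain M a L b →
    ∀ (h : 0 < L.length), M.SameVertex (M.α (L.get ⟨L.length - 1, Nat.sub_lt h Nat.one_pos⟩)) b
  | [e], a, b, hch, _ => hch.2
  | e :: f :: L, a, b, hch, _ => by
      show M.SameVertex (M.α ((f :: L).get ⟨(f :: L).length - 1, _⟩)) b
      exact vchain_last M (f :: L) (M.α e) b hch.2 (by simp)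
  | [], _, _, _, h => absurd h (by simp)

/-- Closing up a loop-chain gives a zero `τ`-sum, via the closed-walk hypothesis. -/
lemma vchain_loop_sum (M : CombMap) (τ : M.D → ℤ)
    (hwalk : ∀ W : CWalk M.σ M.α, ∑ k : Fin W.n, τ (W.darts k) = 0) :
    ∀ (a : M.D) (L : List M.D), VChain M a L a → (L.map τ).sum = 0 := by
  intro a L hch
  cases L with
  | nil => simp
  | cons e L' =>
    set LL := e :: L' with hLL
    have hpos : 0 < LL.length := by simp [hLL]
    have hchain : ∀ k : Fin LL.length,
        M.σ.SameCycle (M.α (LL.get k)) (LL.get (cyclicNext hpos k)) := by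
      intro k
      rcases Nat.lt_or_ge (k.val + 1) LL.length with hlt | hge
      · have hnext : cyclicNext hpos k = ⟨k.val + 1, hlt⟩ := by
          apply Fin.ext
          show (k.val + 1) % LL.length = k.val + 1
          exact Nat.mod_eq_of_lt hlt
        rw [hnext]
        have := vchain_get M LL a a hch k.val k.isLt hlt
        convert this using 2
      · have hk : k.val + 1 = LL.length := by
          have := k.isLt; omega
        have hnext : cyclicNext hpos k = ⟨0, hpos⟩ := by
          apply Fin.ext
          show (k.val + 1) % LL.length = 0
          rw [hk, Nat.mod_self]
        rw [hnext]
        have hlast := vchain_last M LL a a hch hpos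
        have hhead := vchain_head M LL a a hch hpos
        have hkk : k = ⟨LL.length - 1, Nat.sub_lt hpos Nat.one_pos⟩ := by
          apply Fin.ext; show k.val = LL.length - 1; omega
        rw [hkk]
        exact hlast.trans hhead
    have hsum := hwalk
      { n := LL.length, pos := hpos, darts := fun i => LL.get i, chain := hchain }
    have hconv : (LL.map τ).sum = ∑ i : Fin LL.length, τ (LL.get i) := by
      conv_lhs => rw [← List.ofFn_get LL]
      rw [List.map_ofFn, List.sum_ofFn]
      rfl
    rw [show ((e :: L').map τ).sum = (LL.map τ).sum from rfl, hconv]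
    exact hsum

/-- The elementary step relation on `(dart, level)` pairs. -/
def StepRel (M : CombMap) (τ : M.D → ℤ) : (M.D × ℤ) → (M.D × ℤ) → Prop := fun x z =>
  (z.2 = x.2 ∧ M.SameVertex x.1 z.1) ∨ (z.1 = M.α x.1 ∧ z.2 = x.2 + τ x.1)

/-- Construction of a potential on vertices with prescribed jumps `τ` across edges. -/
lemma exists_vertex_potential (M : CombMap) (τ : M.D → ℤ)
    (hanti : ∀ d, τ (M.α d) = - τ d)
    (hloopsum : ∀ (a : M.D) (L : List M.D), VChain M a L a → (L.map τ).sum = 0) :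
    ∃ u : M.D → ℤ, (∀ d, u (M.σ d) = u d) ∧ (∀ d, u (M.α d) = u d + τ d) := by
  rcases isEmpty_or_nonempty M.D with hE | hNE
  · exact ⟨0, fun d => hE.elim d, fun d => hE.elim d⟩
  classical
  have hsymm : Symmetric (StepRel M τ) := by
    rintro ⟨a, m⟩ ⟨a', m'⟩ (⟨h1, h2⟩ | ⟨h1, h2⟩)
    · exact Or.inl ⟨h1.symm, h2.symm⟩
    · have h1' : a' = M.α a := h1
      have h2' : m' = m + τ a := h2
      refine Or.inr ⟨?_, ?_⟩
      · show a = M.α a'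
        rw [h1', M.α_invol]
      · show m = m' + τ a'
        rw [h1', h2', hanti]; ring
  have hextract : ∀ x z : M.D × ℤ, ReflTransGen (StepRel M τ) x z →
      ∃ L : List M.D, z.2 = x.2 + (L.map τ).sum ∧ VChain M x.1 L z.1 := by
    intro x z h
    induction h with
    | refl =>
      exact ⟨[], by simp, Equiv.Perm.SameCycle.refl _ _⟩
    | @tail b c hxb hbc ih =>
      obtain ⟨L, hsum, hch⟩ := ih
      rcases hbc with ⟨h1, h2⟩ | ⟨h1, h2⟩
      · exact ⟨L, by rw [h1, hsum], vchain_mono M L _ _ _ hch h2⟩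
      · refine ⟨L ++ [b.1], ?_, ?_⟩
        · rw [h2, hsum, List.map_append, List.sum_append]
          simp; ring
        · rw [h1]
          exact vchain_snoc M L _ _ _ hch (Equiv.Perm.SameCycle.refl _ _)
  have huniq : ∀ (d : M.D) (m m' : ℤ), ReflTransGen (StepRel M τ) (d, m) (d, m') → m = m' := by
    intro d m m' h
    obtain ⟨L, hsum, hch⟩ := hextract _ _ h
    rw [hloopsum d L hch] at hsum
    linarith
  have htrans_inv : ∀ (cst : ℤ) (x z : M.D × ℤ), ReflTransGen (StepRel M τ) x z →
      ReflTransGen (StepRel M τ) (x.1, x.2 + cst) (z.1, z.2 + cst) := by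
    intro cst x z h
    induction h with
    | refl => exact ReflTransGen.refl
    | @tail b c hxb hbc ih =>
      apply ih.tail
      rcases hbc with ⟨h1, h2⟩ | ⟨h1, h2⟩
      · exact Or.inl ⟨by show c.2 + cst = b.2 + cst; rw [h1], h2⟩
      · exact Or.inr ⟨h1, by show c.2 + cst = b.2 + cst + τ b.1; rw [h2]; ring⟩
  have hreach : ∀ d : M.D, ∃ m : ℤ,
      ReflTransGen (StepRel M τ) ((Classical.arbitrary M.D), 0) (d, m) := by
    intro d
    have hgen : ∀ a b : M.D, Relation.EqvGen (fun a b => b = M.σ a ∨ b = M.α a) a b →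
        ∀ m : ℤ, ∃ m', ReflTransGen (StepRel M τ) (a, m) (b, m') := by
      intro a b h
      induction h with
      | rel a b hab =>
        intro m
        rcases hab with h | h
        · exact ⟨m, ReflTransGen.single (Or.inl ⟨rfl, by rw [h]; exact ⟨1, by simp⟩⟩)⟩
        · exact ⟨m + τ a, ReflTransGen.single (Or.inr ⟨h, rfl⟩)⟩
      | refl a => exact fun m => ⟨m, ReflTransGen.refl⟩
      | symm a b _ ih =>
        intro m
        obtain ⟨m1, h1⟩ := ih 0
        have h2 := rtg_symm hsymm h1
        have h3 : ReflTransGen (StepRel M τ) (b, m1 + (m - m1)) (a, 0 + (m - m1)) :=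
          htrans_inv (m - m1) (b, m1) (a, 0) h2
        rw [show m1 + (m - m1) = m from by ring] at h3
        exact ⟨0 + (m - m1), h3⟩
      | trans a b c _ _ ih1 ih2 =>
        intro m
        obtain ⟨m1, h1⟩ := ih1 m
        obtain ⟨m2, h2⟩ := ih2 m1
        exact ⟨m2, h1.trans h2⟩
    exact hgen _ d (M.connected _ d) 0
  choose u hu using hreach
  refine ⟨u, ?_, ?_⟩
  · intro d
    have h1 : ReflTransGen (StepRel M τ) ((Classical.arbitrary M.D), 0) (M.σ d, u d) :=
      (hu d).tail (Or.inl ⟨rfl, ⟨1, by simp⟩⟩)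
    have h2 := (rtg_symm hsymm (hu (M.σ d))).trans h1
    exact huniq _ _ _ h2
  · intro d
    have h1 : ReflTransGen (StepRel M τ) ((Classical.arbitrary M.D), 0) (M.α d, u d + τ d) :=
      (hu d).tail (Or.inr ⟨rfl, rfl⟩)
    have h2 := (rtg_symm hsymm (hu (M.α d))).trans h1
    exact huniq _ _ _ h2

end Aux4


section Aux5

open Finset

lemma outdegPrimal_cast (M : CombMap) (o : M.D × Bool → Bool) (d0 : M.D) :
    (M.outdegPrimal o d0 : ℤ)
      = ∑ d : M.D, (if M.SameVertex d0 d then bti (o (d, false)) else 0) := by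
  classical
  unfold CombMap.outdegPrimal
  rw [Nat.card_eq_fintype_card, Fintype.card_subtype, Finset.card_filter]
  push_cast
  apply Finset.sum_congr rfl
  intro d _
  by_cases h1 : M.SameVertex d0 d <;> cases h2 : o (d, false) <;> simp [h1, h2, bti]

lemma outdegDual_cast (M : CombMap) (o : M.D × Bool → Bool) (d0 : M.D) :
    (M.outdegDual o d0 : ℤ)
      = ∑ d : M.D, (if M.SameFace d0 d then bti (o (d, true)) else 0) := by
  classical
  unfold CombMap.outdegDual
  rw [Nat.card_eq_fintype_card, Fintype.card_subtype, Finset.card_filter]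
  push_cast
  apply Finset.sum_congr rfl
  intro d _
  by_cases h1 : M.SameFace d0 d <;> cases h2 : o (d, true) <;> simp [h1, h2, bti]

lemma outdegEdge_cast (M : CombMap) (o : M.D × Bool → Bool) (d0 : M.D) :
    (M.outdegEdge o d0 : ℤ)
      = (1 - bti (o (d0, false))) + (1 - bti (o (M.α d0, false)))
        + (1 - bti (o (d0, true))) + (1 - bti (o (M.α d0, true))) := by
  unfold CombMap.outdegEdge
  push_cast
  cases h1 : o (d0, false) <;> cases h2 : o (M.α d0, false) <;>
    cases h3 : o (d0, true) <;> cases h4 : o (M.α d0, true) <;>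
    simp [h1, h2, h3, h4, bti]

lemma primal_diff_sum (M : CombMap) (o o' : M.D × Bool → Bool) (d0 : M.D) :
    (∑ d : M.D, if M.SameVertex d0 d then M.pdcDiff o o' (d, false) else 0)
    = (M.outdegPrimal o d0 : ℤ) - (M.outdegPrimal o' d0 : ℤ) := by
  rw [outdegPrimal_cast, outdegPrimal_cast, ← Finset.sum_sub_distrib]
  apply Finset.sum_congr rfl
  intro d _
  rw [pdcDiff_eq]
  split_ifs <;> ring

lemma dual_diff_sum (M : CombMap) (o o' : M.D × Bool → Bool) (d0 : M.D) :
    (∑ d : M.D, if M.SameFace d0 d then M.pdcDiff o o' (d, true) else 0)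
    = (M.outdegDual o d0 : ℤ) - (M.outdegDual o' d0 : ℤ) := by
  rw [outdegDual_cast, outdegDual_cast, ← Finset.sum_sub_distrib]
  apply Finset.sum_congr rfl
  intro d _
  rw [pdcDiff_eq]
  split_ifs <;> ring

lemma edge_diff_sum (M : CombMap) (o o' : M.D × Bool → Bool) (d0 : M.D) :
    M.pdcDiff o o' (d0, false) + M.pdcDiff o o' (M.α d0, false)
      + M.pdcDiff o o' (d0, true) + M.pdcDiff o o' (M.α d0, true)
    = (M.outdegEdge o' d0 : ℤ) - (M.outdegEdge o d0 : ℤ) := by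
  rw [outdegEdge_cast, outdegEdge_cast, pdcDiff_eq, pdcDiff_eq, pdcDiff_eq, pdcDiff_eq]
  ring

lemma sameOutdeg_iff_balances (M : CombMap) (o o' : M.D × Bool → Bool) :
    M.SameOutdegrees o o' ↔
      ((∀ d0, (∑ d : M.D, if M.SameVertex d0 d then M.pdcDiff o o' (d, false) else 0) = 0) ∧
       (∀ d0, (∑ d : M.D, if M.SameFace d0 d then M.pdcDiff o o' (d, true) else 0) = 0) ∧
       (∀ d, M.pdcDiff o o' (d, false) + M.pdcDiff o o' (M.α d, false)
          + M.pdcDiff o o' (d, true) + M.pdcDiff o o' (M.α d, true) = 0)) := by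
  unfold CombMap.SameOutdegrees
  constructor
  · rintro ⟨h1, h2, h3⟩
    refine ⟨fun d0 => ?_, fun d0 => ?_, fun d => ?_⟩
    · rw [primal_diff_sum, h1 d0]; ring
    · rw [dual_diff_sum, h2 d0]; ring
    · rw [edge_diff_sum, h3 d]; ring
  · rintro ⟨h1, h2, h3⟩
    refine ⟨fun d0 => ?_, fun d0 => ?_, fun d0 => ?_⟩
    · have h := primal_diff_sum M o o' d0
      rw [h1 d0] at h
      have : (M.outdegPrimal o d0 : ℤ) = (M.outdegPrimal o' d0 : ℤ) := by linarith
      exact_mod_cast this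
    · have h := dual_diff_sum M o o' d0
      rw [h2 d0] at h
      have : (M.outdegDual o d0 : ℤ) = (M.outdegDual o' d0 : ℤ) := by linarith
      exact_mod_cast this
    · have h := edge_diff_sum M o o' d0
      rw [h3 d0] at h
      have : (M.outdegEdge o d0 : ℤ) = (M.outdegEdge o' d0 : ℤ) := by linarith
      exact_mod_cast this

/-- The tail corner of an edge of `Ĝ`. -/
def CombMap.pdcTail (M : CombMap) (x : M.D × Bool) : M.D :=
  if x.2 then x.1 else M.σ⁻¹ x.1

/-- The head corner of an edge of `Ĝ`. -/
def CombMap.pdcHead (M : CombMap) (x : M.D × Bool) : M.D :=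
  if x.2 then M.facePerm x.1 else x.1

/-- The colour classes of the difference of two Schnyder orientations. -/
def colorSet (M : CombMap) (t : M.D × Bool → ℤ) (δ : M.D → ZMod 3) (i : ZMod 3) :
    Set (M.D × Bool) :=
  {x | t x ≠ 0 ∧ (if t x = 1 then δ (M.pdcTail x) else δ (M.pdcHead x)) = i}

lemma edge_case (u v i : ZMod 3) (t : ℤ) (hval : t = 1 ∨ t = 0 ∨ t = -1)
    (hc : ((t : ℤ) : ZMod 3) = v - u) :
    ((if t ≠ 0 ∧ (if t = 1 then u else v) = i then t else 0)
      - (if t ≠ 0 ∧ (if t = 1 then u else v) = i + 1 then t else 0))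
    = (if v = i + 1 then 1 else 0) - (if u = i + 1 then 1 else 0) := by
  rcases hval with rfl | rfl | rfl
  · push_cast at hc
    replace hc : v = u + 1 := by linear_combination -hc
    subst hc
    clear * -
    revert u i
    decide
  · push_cast at hc
    replace hc : v = u := by linear_combination -hc
    subst hc
    simp
  · push_cast at hc
    replace hc : u = v + 1 := by linear_combination hc
    subst hc
    clear * -
    revert v i
    decide

lemma colorSet_diff (M : CombMap) (t : M.D × Bool → ℤ) (δ : M.D → ZMod 3)
    (hval : ∀ x, t x = 1 ∨ t x = 0 ∨ t x = -1)
    (hc : ∀ x, ((t x : ℤ) : ZMod 3) = δ (M.pdcHead x) - δ (M.pdcTail x)) (i : ZMod 3) :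
    restrictFlow t (colorSet M t δ i) - restrictFlow t (colorSet M t δ (i + 1))
      = M.cob (fun d => if δ d = i + 1 then 1 else 0) := by
  funext x
  have hcob : M.cob (fun d => if δ d = i + 1 then (1:ℤ) else 0) x
      = (if δ (M.pdcHead x) = i + 1 then 1 else 0)
        - (if δ (M.pdcTail x) = i + 1 then 1 else 0) := by
    rcases x with ⟨d, b⟩
    cases b
    · rw [cob_false]; rfl
    · rw [cob_true]; rfl
  rw [Pi.sub_apply, hcob]
  have hmem : ∀ j : ZMod 3, restrictFlow t (colorSet M t δ j) x
      = (if (t x ≠ 0 ∧ (if t x = 1 then δ (M.pdcTail x) else δ (M.pdcHead x)) = j)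
          then t x else 0) := by
    intro j
    unfold restrictFlow
    by_cases h : t x ≠ 0 ∧ (if t x = 1 then δ (M.pdcTail x) else δ (M.pdcHead x)) = j
    · rw [if_pos (show x ∈ colorSet M t δ j from h), if_pos h]
    · rw [if_neg (show x ∉ colorSet M t δ j from h), if_neg h]
  rw [hmem, hmem]
  exact edge_case (δ (M.pdcTail x)) (δ (M.pdcHead x)) i (t x) (hval x) (hc x)

lemma colorSet_support (M : CombMap) (t : M.D × Bool → ℤ) (δ : M.D → ZMod 3) :
    ∀ x, t x ≠ 0 ↔ x ∈ colorSet M t δ 0 ∪ colorSet M t δ 1 ∪ colorSet M t δ 2 := by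
  intro x
  simp only [Set.mem_union]
  constructor
  · intro h
    have h3 : ∀ a : ZMod 3, a = 0 ∨ a = 1 ∨ a = 2 := by decide
    rcases h3 (if t x = 1 then δ (M.pdcTail x) else δ (M.pdcHead x)) with h' | h' | h'
    · exact Or.inl (Or.inl ⟨h, h'⟩)
    · exact Or.inl (Or.inr ⟨h, h'⟩)
    · exact Or.inr ⟨h, h'⟩
  · rintro ((⟨h, _⟩ | ⟨h, _⟩) | ⟨h, _⟩) <;> exact h

lemma colorSet_disjoint (M : CombMap) (t : M.D × Bool → ℤ) (δ : M.D → ZMod 3)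
    {i j : ZMod 3} (hij : i ≠ j) :
    Disjoint (colorSet M t δ i) (colorSet M t δ j) := by
  rw [Set.disjoint_left]
  rintro x ⟨h1, h2⟩ ⟨h1', h2'⟩
  exact hij (by rw [← h2, ← h2'])

end Aux5


section Aux6

open Finset

lemma tri_of_cong {a b : ZMod 3} {t : ℤ} (hval : t = 1 ∨ t = 0 ∨ t = -1)
    (hc : ((t : ℤ) : ZMod 3) = b - a) :
    (t = 0 ∧ b = a) ∨ (t = 1 ∧ b = a + 1) ∨ (t = -1 ∧ b = a - 1) := by
  rcases hval with rfl | rfl | rfl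
  · push_cast at hc
    exact Or.inr (Or.inl ⟨rfl, by linear_combination -hc⟩)
  · push_cast at hc
    exact Or.inl ⟨rfl, by linear_combination -hc⟩
  · push_cast at hc
    exact Or.inr (Or.inr ⟨rfl, by linear_combination -hc⟩)

lemma restrict_color_eq (M : CombMap) (t : M.D × Bool → ℤ) (δ : M.D → ZMod 3) (i : ZMod 3)
    (hval : ∀ x, t x = 1 ∨ t x = 0 ∨ t x = -1) (x : M.D × Bool) :
    restrictFlow t (colorSet M t δ i) x
      = (if t x = 1 ∧ δ (M.pdcTail x) = i then (1:ℤ)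
          else if t x = -1 ∧ δ (M.pdcHead x) = i then -1 else 0) := by
  have hiff : x ∈ colorSet M t δ i ↔
      (t x = 1 ∧ δ (M.pdcTail x) = i) ∨ (t x = -1 ∧ δ (M.pdcHead x) = i) := by
    constructor
    · rintro ⟨h1, h2⟩
      rcases hval x with h3 | h3 | h3
      · left; exact ⟨h3, by rwa [if_pos h3] at h2⟩
      · exact absurd h3 h1
      · right
        refine ⟨h3, ?_⟩
        rwa [if_neg (by rw [h3]; norm_num)] at h2
    · rintro (⟨h3, hb⟩ | ⟨h3, hb⟩)
      · exact ⟨by rw [h3]; norm_num, by rwa [if_pos h3]⟩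
      · refine ⟨by rw [h3]; norm_num, ?_⟩
        rwa [if_neg (by rw [h3]; norm_num)]
  unfold restrictFlow
  by_cases h : x ∈ colorSet M t δ i
  · rw [if_pos h]
    rcases hiff.1 h with ⟨h3, hb⟩ | ⟨h3, hb⟩
    · rw [if_pos ⟨h3, hb⟩, h3]
    · rw [if_neg (fun hh => by rw [h3] at hh; norm_num at hh), if_pos ⟨h3, hb⟩, h3]
  · rw [if_neg h]
    rw [if_neg (fun hh => h (hiff.2 (Or.inl hh))), if_neg (fun hh => h (hiff.2 (Or.inr hh)))]

lemma colorSet_eulerian (M : CombMap) (t : M.D × Bool → ℤ) (δ : M.D → ZMod 3)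
    (hval : ∀ x, t x = 1 ∨ t x = 0 ∨ t x = -1)
    (hcF : ∀ d, ((t (d, false) : ℤ) : ZMod 3) = δ d - δ (M.σ⁻¹ d))
    (hcT : ∀ d, ((t (d, true) : ℤ) : ZMod 3) = δ (M.facePerm d) - δ d)
    (hbal1 : ∀ d0, (∑ d : M.D, if M.SameVertex d0 d then t (d, false) else 0) = 0)
    (hbal2 : ∀ d0, (∑ d : M.D, if M.SameFace d0 d then t (d, true) else 0) = 0)
    (hbal3 : ∀ d, t (d, false) + t (M.α d, false) + t (d, true) + t (M.α d, true) = 0)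
    (i : ZMod 3) :
    M.PDCEulerian (restrictFlow t (colorSet M t δ i)) := by
  classical
  have hrF : ∀ d : M.D, restrictFlow t (colorSet M t δ i) (d, false)
      = (if t (d, false) = 1 ∧ δ (M.σ⁻¹ d) = i then (1:ℤ)
          else if t (d, false) = -1 ∧ δ d = i then -1 else 0) :=
    fun d => restrict_color_eq M t δ i hval (d, false)
  have hrT : ∀ d : M.D, restrictFlow t (colorSet M t δ i) (d, true)
      = (if t (d, true) = 1 ∧ δ d = i then (1:ℤ)
          else if t (d, true) = -1 ∧ δ (M.facePerm d) = i then -1 else 0) :=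
    fun d => restrict_color_eq M t δ i hval (d, true)
  refine ⟨?_, ?_, ?_⟩
  · -- primal balance
    intro d0
    have hiffp : ∀ d : M.D, M.SameVertex d0 d ↔ M.SameVertex d0 (M.σ d) :=
      fun d => (Equiv.Perm.sameCycle_apply_right).symm
    set e := M.σ.subtypePerm (fun d => (hiffp d).symm) with he
    rw [sum_if_subtype (fun d => M.SameVertex d0 d)
      (fun d => restrictFlow t (colorSet M t δ i) (d, false))]
    have hre : (∑ k : {d : M.D // M.SameVertex d0 d},
          restrictFlow t (colorSet M t δ i) (k.val, false))
        = ∑ k : {d : M.D // M.SameVertex d0 d},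
          restrictFlow t (colorSet M t δ i) ((M.σ k.val), false) :=
      (Equiv.sum_comp e
        (fun k => restrictFlow t (colorSet M t δ i) (k.val, false))).symm
    rw [hre]
    have hh : ∀ k : {d : M.D // M.SameVertex d0 d},
        ((fun k : {d : M.D // M.SameVertex d0 d} => t (M.σ k.val, false)) k = 0
            ∧ (fun k : {d : M.D // M.SameVertex d0 d} => δ k.val) (e k)
              = (fun k : {d : M.D // M.SameVertex d0 d} => δ k.val) k)
        ∨ ((fun k : {d : M.D // M.SameVertex d0 d} => t (M.σ k.val, false)) k = 1
            ∧ (fun k : {d : M.D // M.SameVertex d0 d} => δ k.val) (e k)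
              = (fun k : {d : M.D // M.SameVertex d0 d} => δ k.val) k + 1)
        ∨ ((fun k : {d : M.D // M.SameVertex d0 d} => t (M.σ k.val, false)) k = -1
            ∧ (fun k : {d : M.D // M.SameVertex d0 d} => δ k.val) (e k)
              = (fun k : {d : M.D // M.SameVertex d0 d} => δ k.val) k - 1) := by
      intro k
      have hc := hcF (M.σ k.val)
      rw [Equiv.Perm.inv_apply_self] at hc
      exact tri_of_cong (hval (M.σ k.val, false)) hc
    have hs : ∑ k : {d : M.D // M.SameVertex d0 d}, t (M.σ k.val, false) = 0 := by
      have h1 : (∑ k : {d : M.D // M.SameVertex d0 d}, t (M.σ k.val, false))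
          = ∑ k : {d : M.D // M.SameVertex d0 d}, t (k.val, false) :=
        Equiv.sum_comp e (fun k => t (k.val, false))
      rw [h1, ← sum_if_subtype (fun d => M.SameVertex d0 d) (fun d => t (d, false))]
      exact hbal1 d0
    have hwind := winding e (fun k => δ k.val) (fun k => t (M.σ k.val, false)) hh hs i
    have hterm : (∑ k : {d : M.D // M.SameVertex d0 d},
          restrictFlow t (colorSet M t δ i) ((M.σ k.val), false))
        = ∑ k : {d : M.D // M.SameVertex d0 d},
            (if t (M.σ k.val, false) = 1 ∧ δ k.val = i then (1:ℤ)
              else if t (M.σ k.val, false) = -1 ∧ δ (M.σ k.val) = i then -1 else 0) := by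
      apply Finset.sum_congr rfl
      intro k _
      rw [hrF (M.σ k.val), Equiv.Perm.inv_apply_self]
    rw [hterm]
    exact hwind
  · -- dual balance
    intro d0
    have hiffp : ∀ d : M.D, M.SameFace d0 d ↔ M.SameFace d0 (M.facePerm d) :=
      fun d => (Equiv.Perm.sameCycle_apply_right).symm
    set e := M.facePerm.subtypePerm (fun d => (hiffp d).symm) with he
    rw [sum_if_subtype (fun d => M.SameFace d0 d)
      (fun d => restrictFlow t (colorSet M t δ i) (d, true))]
    have hh : ∀ k : {d : M.D // M.SameFace d0 d},
        ((fun k : {d : M.D // M.SameFace d0 d} => t (k.val, true)) k = 0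
            ∧ (fun k : {d : M.D // M.SameFace d0 d} => δ k.val) (e k)
              = (fun k : {d : M.D // M.SameFace d0 d} => δ k.val) k)
        ∨ ((fun k : {d : M.D // M.SameFace d0 d} => t (k.val, true)) k = 1
            ∧ (fun k : {d : M.D // M.SameFace d0 d} => δ k.val) (e k)
              = (fun k : {d : M.D // M.SameFace d0 d} => δ k.val) k + 1)
        ∨ ((fun k : {d : M.D // M.SameFace d0 d} => t (k.val, true)) k = -1
            ∧ (fun k : {d : M.D // M.SameFace d0 d} => δ k.val) (e k)
              = (fun k : {d : M.D // M.SameFace d0 d} => δ k.val) k - 1) := by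
      intro k
      exact tri_of_cong (hval (k.val, true)) (hcT k.val)
    have hs : ∑ k : {d : M.D // M.SameFace d0 d}, t (k.val, true) = 0 := by
      rw [← sum_if_subtype (fun d => M.SameFace d0 d) (fun d => t (d, true))]
      exact hbal2 d0
    have hwind := winding e (fun k => δ k.val) (fun k => t (k.val, true)) hh hs i
    have hterm : (∑ k : {d : M.D // M.SameFace d0 d},
          restrictFlow t (colorSet M t δ i) (k.val, true))
        = ∑ k : {d : M.D // M.SameFace d0 d},
            (if t (k.val, true) = 1 ∧ δ k.val = i then (1:ℤ)
              else if t (k.val, true) = -1 ∧ δ (M.facePerm k.val) = i then -1 else 0) := by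
      apply Finset.sum_congr rfl
      intro k _
      rw [hrT k.val]
    rw [hterm]
    exact hwind
  · -- edge balance
    intro d
    let sw : Fin 4 → ℤ := ![t (d, false), t (d, true), t (M.α d, false), t (M.α d, true)]
    let yy : Fin 4 → ZMod 3 := ![δ (M.σ⁻¹ d), δ d, δ (M.σ⁻¹ (M.α d)), δ (M.α d)]
    let e4 : Fin 4 ≃ Fin 4 :=
      ⟨fun k => k + 1, fun k => k + 3, by decide, by decide⟩
    have hh : ∀ k : Fin 4, (sw k = 0 ∧ yy (e4 k) = yy k) ∨
        (sw k = 1 ∧ yy (e4 k) = yy k + 1) ∨ (sw k = -1 ∧ yy (e4 k) = yy k - 1) := by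
      intro k
      fin_cases k
      · have hc := hcF d
        exact tri_of_cong (hval (d, false)) hc
      · have hc := hcT d
        rw [facePerm_apply] at hc
        exact tri_of_cong (hval (d, true)) hc
      · have hc := hcF (M.α d)
        exact tri_of_cong (hval (M.α d, false)) hc
      · have hc := hcT (M.α d)
        rw [facePerm_apply, M.α_invol] at hc
        exact tri_of_cong (hval (M.α d, true)) hc
    have hs : ∑ k : Fin 4, sw k = 0 := by
      rw [Fin.sum_univ_four]
      show t (d, false) + t (d, true) + t (M.α d, false) + t (M.α d, true) = 0
      linarith [hbal3 d]
    have hwind := winding e4 yy sw hh hs i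
    rw [Fin.sum_univ_four] at hwind
    have e0 : (if sw 0 = 1 ∧ yy 0 = i then (1:ℤ) else if sw 0 = -1 ∧ yy (e4 0) = i then -1 else 0)
        = (if t (d, false) = 1 ∧ δ (M.σ⁻¹ d) = i then 1
            else if t (d, false) = -1 ∧ δ d = i then -1 else 0) := rfl
    have e1 : (if sw 1 = 1 ∧ yy 1 = i then (1:ℤ) else if sw 1 = -1 ∧ yy (e4 1) = i then -1 else 0)
        = (if t (d, true) = 1 ∧ δ d = i then 1
            else if t (d, true) = -1 ∧ δ (M.σ⁻¹ (M.α d)) = i then -1 else 0) := rfl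
    have e2 : (if sw 2 = 1 ∧ yy 2 = i then (1:ℤ) else if sw 2 = -1 ∧ yy (e4 2) = i then -1 else 0)
        = (if t (M.α d, false) = 1 ∧ δ (M.σ⁻¹ (M.α d)) = i then 1
            else if t (M.α d, false) = -1 ∧ δ (M.α d) = i then -1 else 0) := rfl
    have e3 : (if sw 3 = 1 ∧ yy 3 = i then (1:ℤ) else if sw 3 = -1 ∧ yy (e4 3) = i then -1 else 0)
        = (if t (M.α d, true) = 1 ∧ δ (M.α d) = i then 1
            else if t (M.α d, true) = -1 ∧ δ (M.σ⁻¹ d) = i then -1 else 0) := rfl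
    rw [e0, e1, e2, e3] at hwind
    have g0 := hrF d
    have g1 := hrT d
    have g2 := hrF (M.α d)
    have g3 := hrT (M.α d)
    rw [facePerm_apply] at g1
    rw [facePerm_apply, M.α_invol] at g3
    rw [g0, g1, g2, g3]
    linarith [hwind]

end Aux6


section Aux7

open Finset

/-- From two Schnyder labelings, the difference function δ with its congruences. -/
lemma schnyder_pair_delta (M : CombMap) (o o' : M.D × Bool → Bool)
    (lab lab' : M.D → ZMod 3)
    (hlab : IsSchnyderLabeling M.σ M.α lab) (ho : o = M.labOrientation lab)
    (hlab' : IsSchnyderLabeling M.σ M.α lab') (ho' : o' = M.labOrientation lab') :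
    (∀ d, ((M.pdcDiff o o' (d, false) : ℤ) : ZMod 3)
        = (lab d - lab' d) - (lab (M.σ⁻¹ d) - lab' (M.σ⁻¹ d))) ∧
    (∀ d, ((M.pdcDiff o o' (d, true) : ℤ) : ZMod 3)
        = (lab (M.facePerm d) - lab' (M.facePerm d)) - (lab d - lab' d)) := by
  constructor
  · intro d
    have h1 := lab_step_false M lab hlab d
    have h2 := lab_step_false M lab' hlab' d
    have h3 : ((M.pdcDiff o o' (d, false) : ℤ) : ZMod 3)
        = ((bti (o (d, false)) : ℤ) : ZMod 3) - ((bti (o' (d, false)) : ℤ) : ZMod 3) := by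
      rw [pdcDiff_eq]; push_cast; ring
    rw [h3, ho, ho']
    first
    | linear_combination h2 - h1
    | linear_combination h1 - h2
  · intro d
    have h1 := lab_step_true M lab hlab d
    have h2 := lab_step_true M lab' hlab' d
    have h3 : ((M.pdcDiff o o' (d, true) : ℤ) : ZMod 3)
        = ((bti (o (d, true)) : ℤ) : ZMod 3) - ((bti (o' (d, true)) : ℤ) : ZMod 3) := by
      rw [pdcDiff_eq]; push_cast; ring
    rw [h3, ho, ho']
    first
    | linear_combination h2 - h1
    | linear_combination h1 - h2

/-- Reconstruction of a Schnyder labeling for `o'` from a shift `δ`. -/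
lemma schnyder_of_cob_delta (M : CombMap) (o o' : M.D × Bool → Bool)
    (lab : M.D → ZMod 3)
    (hlab : IsSchnyderLabeling M.σ M.α lab) (ho : o = M.labOrientation lab)
    (δ : M.D → ZMod 3)
    (hcF : ∀ d, ((M.pdcDiff o o' (d, false) : ℤ) : ZMod 3) = δ d - δ (M.σ⁻¹ d))
    (hcT : ∀ d, ((M.pdcDiff o o' (d, true) : ℤ) : ZMod 3) = δ (M.facePerm d) - δ d) :
    M.IsSchnyderOrientation o' := by
  set lab' : M.D → ZMod 3 := fun d => lab d - δ d with hl
  have key1 : ∀ d, lab' d - lab' (M.σ⁻¹ d) = ((bti (o' (d, false)) : ℤ) : ZMod 3) := by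
    intro d
    have h1 := lab_step_false M lab hlab d
    rw [← ho] at h1
    have h2 := hcF d
    rw [pdcDiff_eq] at h2
    push_cast at h2
    simp only [hl]
    first
    | linear_combination h1 - h2
    | linear_combination h2 - h1
    | linear_combination h1 + h2
    | linear_combination - h1 - h2
  have key2 : ∀ d, lab' (M.facePerm d) - lab' d = ((bti (o' (d, true)) : ℤ) : ZMod 3) := by
    intro d
    have h1 := lab_step_true M lab hlab d
    rw [← ho] at h1
    have h2 := hcT d
    rw [pdcDiff_eq] at h2
    push_cast at h2
    simp only [hl]
    first
    | linear_combination h1 - h2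
    | linear_combination h2 - h1
    | linear_combination h1 + h2
    | linear_combination - h1 - h2
  have hslab : M.SLab lab' := by
    intro d
    constructor
    · rw [key1 d]
      cases h : o' (d, false)
      · left; unfold bti; norm_num
      · right; unfold bti; norm_num
    · rw [key2 d]
      cases h : o' (d, true)
      · left; unfold bti; norm_num
      · right; unfold bti; norm_num
  refine ⟨lab', (isSchnyderLabeling_iff_slab M lab').2 hslab, ?_⟩
  funext x
  rcases x with ⟨d, b⟩
  cases b
  · have hk := key1 d
    cases h : o' (d, false)
    · rw [h] at hk
      unfold bti at hk
      norm_num at hk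
      have hne : ¬ (lab' d = lab' (M.σ⁻¹ d) + 1) := by
        intro hcontra
        rw [hcontra] at hk
        simp at hk
      simp [CombMap.labOrientation, hne]; exact hne
    · rw [h] at hk
      unfold bti at hk
      norm_num at hk
      have heq : lab' d = lab' (M.σ⁻¹ d) + 1 := by linear_combination hk
      simp [CombMap.labOrientation, heq]
  · have hk := key2 d
    cases h : o' (d, true)
    · rw [h] at hk
      unfold bti at hk
      norm_num at hk
      have hne : ¬ (lab' (M.facePerm d) = lab' d + 1) := by
        intro hcontra
        rw [hcontra] at hk
        simp at hk
      simp [CombMap.labOrientation, hne]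
    · rw [h] at hk
      unfold bti at hk
      norm_num at hk
      have heq : lab' (M.facePerm d) = lab' d + 1 := by linear_combination hk
      simp [CombMap.labOrientation, heq]

lemma t_eq_sum_restrict (M : CombMap) (t : M.D × Bool → ℤ)
    (S0 S1 S2 : Set (M.D × Bool))
    (hsupp : ∀ x, t x ≠ 0 ↔ x ∈ S0 ∪ S1 ∪ S2)
    (h01 : Disjoint S0 S1) (h02 : Disjoint S0 S2) (h12 : Disjoint S1 S2) :
    ∀ x, t x = restrictFlow t S0 x + restrictFlow t S1 x + restrictFlow t S2 x := by
  intro x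
  unfold restrictFlow
  by_cases h0 : x ∈ S0
  · have h1 : x ∉ S1 := fun h => Set.disjoint_left.1 h01 h0 h
    have h2 : x ∉ S2 := fun h => Set.disjoint_left.1 h02 h0 h
    rw [if_pos h0, if_neg h1, if_neg h2]; ring
  · by_cases h1 : x ∈ S1
    · have h2 : x ∉ S2 := fun h => Set.disjoint_left.1 h12 h1 h
      rw [if_neg h0, if_pos h1, if_neg h2]; ring
    · by_cases h2 : x ∈ S2
      · rw [if_neg h0, if_neg h1, if_pos h2]; ring
      · rw [if_neg h0, if_neg h1, if_neg h2]
        have ht : t x = 0 := by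
          by_contra h
          rcases (hsupp x).1 h with (hh | hh) | hh
          exacts [h0 hh, h1 hh, h2 hh]
        rw [ht]; ring

end Aux7


/-- Let `D, D'` be orientations of `Ĝ` with `D` a Schnyder
orientation and `T = D \ D'`.  Then: (1) `D'` is a Schnyder orientation iff `T`
is partitionable; (2) `D'` is a Schnyder orientation with the same outdegrees
as `D` iff `T` is Eulerian-partitionable; (3) `D'` is a Schnyder orientation
with the same outdegrees and the same type as `D` iff `T` is `0`-homologous
(i.e. `D` and `D'` are homologous). -/
theorem schnyder_orientation_transformations
    (M : CombMap) (g : ℕ) (hgenus : M.eulerChar = 2 - 2 * (g : ℤ))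
    (hloop : M.NoContractibleLoop) (hmulti : M.NoHomotopicMultiEdges)
    (B : Fin (2 * g) → M.ClosedWalk) (hBc : ∀ i, (B i).IsCycle)
    (hB : IsHomologyBasis M.σ M.α B)
    (o o' : M.D × Bool → Bool) (hD : M.IsSchnyderOrientation o) :
    (M.IsSchnyderOrientation o' ↔ M.PDCPartitionable (M.pdcDiff o o')) ∧
    ((M.IsSchnyderOrientation o' ∧ M.SameOutdegrees o o') ↔
        M.PDCEulerianPartitionable (M.pdcDiff o o')) ∧
    ((M.IsSchnyderOrientation o' ∧ M.SameOutdegrees o o' ∧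
        ∀ i, M.gammaPDC o (B i) = M.gammaPDC o' (B i)) ↔
      M.pdcDiff o o' ∈ M.pdcFacialSubgroup) := by
  classical
  obtain ⟨lab, hlab, ho⟩ := hD
  set T := M.pdcDiff o o' with hT
  have hval : ∀ x, T x = 1 ∨ T x = 0 ∨ T x = -1 := pdcDiff_val M o o'
  -- produce δ from a Schnyder structure on o'
  have mkδ : M.IsSchnyderOrientation o' → ∃ δ : M.D → ZMod 3,
      (∀ d, ((T (d, false) : ℤ) : ZMod 3) = δ d - δ (M.σ⁻¹ d)) ∧
      (∀ d, ((T (d, true) : ℤ) : ZMod 3) = δ (M.facePerm d) - δ d) := by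
    rintro ⟨lab', hlab', ho'⟩
    obtain ⟨hF, hTr⟩ := schnyder_pair_delta M o o' lab lab' hlab ho hlab' ho'
    exact ⟨fun d => lab d - lab' d, hF, hTr⟩
  have mkSch : ∀ δ : M.D → ZMod 3,
      (∀ d, ((T (d, false) : ℤ) : ZMod 3) = δ d - δ (M.σ⁻¹ d)) →
      (∀ d, ((T (d, true) : ℤ) : ZMod 3) = δ (M.facePerm d) - δ d) →
      M.IsSchnyderOrientation o' :=
    fun δ h1 h2 => schnyder_of_cob_delta M o o' lab hlab ho δ h1 h2
  have hbal_iff := sameOutdeg_iff_balances M o o'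
  -- the homology part of the colour partition, given δ
  have homol : ∀ δ : M.D → ZMod 3,
      (∀ d, ((T (d, false) : ℤ) : ZMod 3) = δ d - δ (M.σ⁻¹ d)) →
      (∀ d, ((T (d, true) : ℤ) : ZMod 3) = δ (M.facePerm d) - δ d) →
      (restrictFlow T (colorSet M T δ 0) - restrictFlow T (colorSet M T δ 1)
          ∈ M.pdcFacialSubgroup) ∧
      (restrictFlow T (colorSet M T δ 0) - restrictFlow T (colorSet M T δ 2)
          ∈ M.pdcFacialSubgroup) ∧
      (restrictFlow T (colorSet M T δ 1) - restrictFlow T (colorSet M T δ 2)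
          ∈ M.pdcFacialSubgroup) := by
    intro δ hcF hcT
    have hc : ∀ x, ((T x : ℤ) : ZMod 3) = δ (M.pdcHead x) - δ (M.pdcTail x) := by
      rintro ⟨d, b⟩
      cases b
      · exact hcF d
      · exact hcT d
    have h01 := colorSet_diff M T δ hval hc 0
    have h12 := colorSet_diff M T δ hval hc 1
    rw [show (0 : ZMod 3) + 1 = 1 from by decide] at h01
    rw [show (1 : ZMod 3) + 1 = 2 from by decide] at h12
    refine ⟨?_, ?_, ?_⟩
    · rw [h01]; exact cob_mem_facial M _
    · have heq : restrictFlow T (colorSet M T δ 0) - restrictFlow T (colorSet M T δ 2)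
          = (restrictFlow T (colorSet M T δ 0) - restrictFlow T (colorSet M T δ 1))
            + (restrictFlow T (colorSet M T δ 1) - restrictFlow T (colorSet M T δ 2)) := by
        ring
      rw [heq, h01, h12]
      exact AddSubgroup.add_mem _ (cob_mem_facial M _) (cob_mem_facial M _)
    · rw [h12]; exact cob_mem_facial M _
  -- Part (1)
  have part1 : M.IsSchnyderOrientation o' ↔ M.PDCPartitionable T := by
    constructor
    · intro hD'
      obtain ⟨δ, hcF, hcT⟩ := mkδ hD'
      obtain ⟨m01, m02, m12⟩ := homol δ hcF hcT
      exact ⟨colorSet M T δ 0, colorSet M T δ 1, colorSet M T δ 2,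
        colorSet_support M T δ,
        colorSet_disjoint M T δ (show (0 : ZMod 3) ≠ 1 from by decide),
        colorSet_disjoint M T δ (show (0 : ZMod 3) ≠ 2 from by decide),
        colorSet_disjoint M T δ (show (1 : ZMod 3) ≠ 2 from by decide),
        m01, m02, m12⟩
    · rintro ⟨S0, S1, S2, hsupp, h01, h02, h12, m01, m02, m12⟩
      obtain ⟨a, ha⟩ := (mem_facial_iff_cob M _).1 m01
      obtain ⟨b, hb⟩ := (mem_facial_iff_cob M _).1 m12
      have hsum3 := t_eq_sum_restrict M T S0 S1 S2 hsupp h01 h02 h12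
      have h3z : ((3 : ℤ) : ZMod 3) = 0 := by decide
      apply mkSch (fun d => ((a d + 2 * b d : ℤ) : ZMod 3))
      · intro d
        have h1 : M.cob a (d, false)
            = restrictFlow T S0 (d, false) - restrictFlow T S1 (d, false) := by
          rw [← ha]; rfl
        have h2 : M.cob b (d, false)
            = restrictFlow T S1 (d, false) - restrictFlow T S2 (d, false) := by
          rw [← hb]; rfl
        have hx : T (d, false) = 3 * restrictFlow T S2 (d, false)
            + M.cob a (d, false) + 2 * M.cob b (d, false) := by
          rw [h1, h2]
          have := hsum3 (d, false)
          linarith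
        rw [hx, cob_false, cob_false]
        push_cast
        linear_combination ((restrictFlow T S2 (d, false) : ℤ) : ZMod 3) * h3z
      · intro d
        have h1 : M.cob a (d, true)
            = restrictFlow T S0 (d, true) - restrictFlow T S1 (d, true) := by
          rw [← ha]; rfl
        have h2 : M.cob b (d, true)
            = restrictFlow T S1 (d, true) - restrictFlow T S2 (d, true) := by
          rw [← hb]; rfl
        have hx : T (d, true) = 3 * restrictFlow T S2 (d, true)
            + M.cob a (d, true) + 2 * M.cob b (d, true) := by
          rw [h1, h2]
          have := hsum3 (d, true)
          linarith
        rw [hx, cob_true, cob_true]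
        push_cast
        linear_combination ((restrictFlow T S2 (d, true) : ℤ) : ZMod 3) * h3z
  -- Part (2)
  have part2 : (M.IsSchnyderOrientation o' ∧ M.SameOutdegrees o o')
      ↔ M.PDCEulerianPartitionable T := by
    constructor
    · rintro ⟨hD', hout⟩
      obtain ⟨δ, hcF, hcT⟩ := mkδ hD'
      obtain ⟨m01, m02, m12⟩ := homol δ hcF hcT
      obtain ⟨hb1, hb2, hb3⟩ := hbal_iff.1 hout
      exact ⟨colorSet M T δ 0, colorSet M T δ 1, colorSet M T δ 2,
        colorSet_support M T δ,
        colorSet_disjoint M T δ (show (0 : ZMod 3) ≠ 1 from by decide),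
        colorSet_disjoint M T δ (show (0 : ZMod 3) ≠ 2 from by decide),
        colorSet_disjoint M T δ (show (1 : ZMod 3) ≠ 2 from by decide),
        m01, m02, m12,
        colorSet_eulerian M T δ hval hcF hcT hb1 hb2 hb3 0,
        colorSet_eulerian M T δ hval hcF hcT hb1 hb2 hb3 1,
        colorSet_eulerian M T δ hval hcF hcT hb1 hb2 hb3 2⟩
    · rintro ⟨S0, S1, S2, hsupp, h01, h02, h12, m01, m02, m12, he0, he1, he2⟩
      refine ⟨part1.2 ⟨S0, S1, S2, hsupp, h01, h02, h12, m01, m02, m12⟩, ?_⟩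
      apply hbal_iff.2
      have hsum3 := t_eq_sum_restrict M T S0 S1 S2 hsupp h01 h02 h12
      obtain ⟨p0, q0, r0⟩ := he0
      obtain ⟨p1, q1, r1⟩ := he1
      obtain ⟨p2, q2, r2⟩ := he2
      refine ⟨fun d0 => ?_, fun d0 => ?_, fun d => ?_⟩
      · have hpt : ∀ d : M.D, (if M.SameVertex d0 d then T (d, false) else 0)
            = (if M.SameVertex d0 d then restrictFlow T S0 (d, false) else 0)
              + (if M.SameVertex d0 d then restrictFlow T S1 (d, false) else 0)
              + (if M.SameVertex d0 d then restrictFlow T S2 (d, false) else 0) := by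
          intro d
          by_cases h : M.SameVertex d0 d
          · rw [if_pos h, if_pos h, if_pos h, if_pos h]
            exact hsum3 (d, false)
          · rw [if_neg h, if_neg h, if_neg h, if_neg h]; ring
        rw [Finset.sum_congr rfl (fun d _ => hpt d), Finset.sum_add_distrib,
          Finset.sum_add_distrib, p0 d0, p1 d0, p2 d0]
        norm_num
      · have hpt : ∀ d : M.D, (if M.SameFace d0 d then T (d, true) else 0)
            = (if M.SameFace d0 d then restrictFlow T S0 (d, true) else 0)
              + (if M.SameFace d0 d then restrictFlow T S1 (d, true) else 0)
              + (if M.SameFace d0 d then restrictFlow T S2 (d, true) else 0) := by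
          intro d
          by_cases h : M.SameFace d0 d
          · rw [if_pos h, if_pos h, if_pos h, if_pos h]
            exact hsum3 (d, true)
          · rw [if_neg h, if_neg h, if_neg h, if_neg h]; ring
        rw [Finset.sum_congr rfl (fun d _ => hpt d), Finset.sum_add_distrib,
          Finset.sum_add_distrib, q0 d0, q1 d0, q2 d0]
        norm_num
      · have e1 := hsum3 (d, false)
        have e2 := hsum3 (M.α d, false)
        have e3 := hsum3 (d, true)
        have e4 := hsum3 (M.α d, true)
        linarith [r0 d, r1 d, r2 d]
  -- Part (3)
  have part3 : (M.IsSchnyderOrientation o' ∧ M.SameOutdegrees o o' ∧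
        ∀ i, M.gammaPDC o (B i) = M.gammaPDC o' (B i))
      ↔ T ∈ M.pdcFacialSubgroup := by
    constructor
    · rintro ⟨hD', hout, hγ⟩
      obtain ⟨hb1, hb2, hb3⟩ := hbal_iff.1 hout
      obtain ⟨s, hs⟩ := exists_sigma_potential M (fun d => T (d, false)) hb1
      set τ : M.D → ℤ := fun d => T (d, true) + s d - s (M.facePerm d) with hτ
      have hfact1 : ∀ d : M.D, s (M.α d) - s (M.facePerm d) = T (M.α d, false) := by
        intro d
        have h := hs (M.facePerm d)
        rw [facePerm_apply] at h ⊢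
        rw [Equiv.Perm.apply_inv_self] at h
        exact h
      have hfact2 : ∀ d : M.D, s d - s (M.facePerm (M.α d)) = T (d, false) := by
        intro d
        have h := hs (M.σ⁻¹ d)
        rw [Equiv.Perm.apply_inv_self] at h
        rw [facePerm_apply, M.α_invol]
        exact h
      have hanti : ∀ d, τ (M.α d) = - τ d := by
        intro d
        have h1 := hfact1 d
        have h2 := hfact2 d
        have h3 := hb3 d
        simp only [hτ]
        linarith
      have hface : ∀ d0, (∑ d : M.D, if M.SameFace d0 d then τ d else 0) = 0 := by
        intro d0
        have hpt : ∀ d : M.D, (if M.SameFace d0 d then τ d else 0)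
            = (if M.SameFace d0 d then T (d, true) else 0)
              + ((if M.SameFace d0 d then s d else 0)
                - (if M.SameFace d0 d then s (M.facePerm d) else 0)) := by
          intro d
          by_cases h : M.SameFace d0 d
          · rw [if_pos h, if_pos h, if_pos h, if_pos h]
            simp only [hτ]; ring
          · rw [if_neg h, if_neg h, if_neg h, if_neg h]; ring
        rw [Finset.sum_congr rfl (fun d _ => hpt d), Finset.sum_add_distrib,
          Finset.sum_sub_distrib, hb2 d0]
        have hre : (∑ d : M.D, if M.SameFace d0 d then s (M.facePerm d) else 0)
            = ∑ d : M.D, if M.SameFace d0 d then s d else 0 := by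
          have hcomp := Equiv.sum_comp M.facePerm
            (fun e => if M.SameFace d0 e then s e else 0)
          rw [← hcomp]
          apply Finset.sum_congr rfl
          intro d _
          by_cases h : M.SameFace d0 d
          · rw [if_pos h, if_pos ((Equiv.Perm.sameCycle_apply_right).2 h)]
          · rw [if_neg h, if_neg (fun hh => h ((Equiv.Perm.sameCycle_apply_right).1 hh))]
        rw [hre]
        ring
      have hγ2 : ∀ i, pairHom τ ((B i).flow) = 0 := by
        intro i
        have hg := gamma_diff M o o' s hs (B i)
        have hg2 : M.gammaPDC o (B i) - M.gammaPDC o' (B i)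
            = ∑ k : Fin (B i).n, (τ ((B i).darts k) - τ (M.α ((B i).darts k))) := by
          rw [hg]
        have hgz : (∑ k : Fin (B i).n, (τ ((B i).darts k) - τ (M.α ((B i).darts k)))) = 0 := by
          rw [← hg2, hγ i]; ring
        have hsum2 : (∑ k : Fin (B i).n, (τ ((B i).darts k) - τ (M.α ((B i).darts k))))
            = 2 * ∑ k : Fin (B i).n, τ ((B i).darts k) := by
          rw [Finset.mul_sum]
          apply Finset.sum_congr rfl
          intro k _
          rw [hanti]
          ring
        rw [pair_flow M τ hanti (B i), ← hsum2]
        exact hgz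
      have hwalkflow : ∀ W : CWalk M.σ M.α, pairHom τ W.flow = 0 := by
        intro W
        obtain ⟨μ, hμ⟩ := hB W
        have hker := pair_facial_zero M τ hanti hface _ hμ
        rw [map_sub, map_sum] at hker
        have hz : ∀ i ∈ Finset.univ, pairHom τ (μ i • (B i).flow) = 0 := by
          intro i _
          rw [map_zsmul, hγ2 i]
          simp
        rw [Finset.sum_congr rfl hz, Finset.sum_const_zero] at hker
        linarith
      have hwalk : ∀ W : CWalk M.σ M.α, ∑ k : Fin W.n, τ (W.darts k) = 0 := by
        intro W
        have h := pair_flow M τ hanti W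
        rw [hwalkflow W] at h
        linarith
      obtain ⟨u, hu1, hu2⟩ := exists_vertex_potential M τ hanti (vchain_loop_sum M τ hwalk)
      refine (mem_facial_iff_cob M _).2 ⟨fun d => s d + u d, ?_⟩
      funext x
      rcases x with ⟨d, b⟩
      cases b
      · rw [cob_false]
        have h1 := hs (M.σ⁻¹ d)
        rw [Equiv.Perm.apply_inv_self] at h1
        have h2 := hu1 (M.σ⁻¹ d)
        rw [Equiv.Perm.apply_inv_self] at h2
        show T (d, false) = (s d + u d) - (s (M.σ⁻¹ d) + u (M.σ⁻¹ d))
        linarith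
      · rw [cob_true]
        have h2 : u (M.facePerm d) = u (M.α d) := by
          rw [facePerm_apply]
          have h := hu1 (M.σ⁻¹ (M.α d))
          rw [Equiv.Perm.apply_inv_self] at h
          exact h.symm
        have h3 := hu2 d
        show T (d, true) = (s (M.facePerm d) + u (M.facePerm d)) - (s d + u d)
        rw [h2, h3]
        simp only [hτ]
        ring
    · intro hmem
      obtain ⟨c, hc⟩ := (mem_facial_iff_cob M _).1 hmem
      refine ⟨?_, ?_, ?_⟩
      · apply mkSch (fun d => ((c d : ℤ) : ZMod 3))
        · intro d
          rw [hc, cob_false]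
          push_cast
          ring
        · intro d
          rw [hc, cob_true]
          push_cast
          ring
      · apply hbal_iff.2
        refine ⟨fun d0 => ?_, fun d0 => ?_, fun d => ?_⟩
        · have hpt : ∀ d : M.D, (if M.SameVertex d0 d then T (d, false) else 0)
              = (if M.SameVertex d0 d then c d else 0)
                - (if M.SameVertex d0 d then c (M.σ⁻¹ d) else 0) := by
            intro d
            by_cases h : M.SameVertex d0 d
            · rw [if_pos h, if_pos h, if_pos h, hc, cob_false]
            · rw [if_neg h, if_neg h, if_neg h]; ring
          rw [Finset.sum_congr rfl (fun d _ => hpt d), Finset.sum_sub_distrib]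
          have hre : (∑ d : M.D, if M.SameVertex d0 d then c (M.σ⁻¹ d) else 0)
              = ∑ d : M.D, if M.SameVertex d0 d then c d else 0 := by
            have hcomp := Equiv.sum_comp (M.σ⁻¹ : Equiv.Perm M.D)
              (fun e => if M.SameVertex d0 e then c e else 0)
            rw [← hcomp]
            apply Finset.sum_congr rfl
            intro d _
            by_cases h : M.SameVertex d0 d
            · rw [if_pos h, if_pos ((Equiv.Perm.sameCycle_inv_apply_right).2 h)]
            · rw [if_neg h, if_neg (fun hh => h ((Equiv.Perm.sameCycle_inv_apply_right).1 hh))]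
          rw [hre]
          ring
        · have hpt : ∀ d : M.D, (if M.SameFace d0 d then T (d, true) else 0)
              = (if M.SameFace d0 d then c (M.facePerm d) else 0)
                - (if M.SameFace d0 d then c d else 0) := by
            intro d
            by_cases h : M.SameFace d0 d
            · rw [if_pos h, if_pos h, if_pos h, hc, cob_true]
            · rw [if_neg h, if_neg h, if_neg h]; ring
          rw [Finset.sum_congr rfl (fun d _ => hpt d), Finset.sum_sub_distrib]
          have hre : (∑ d : M.D, if M.SameFace d0 d then c (M.facePerm d) else 0)
              = ∑ d : M.D, if M.SameFace d0 d then c d else 0 := by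
            have hcomp := Equiv.sum_comp M.facePerm
              (fun e => if M.SameFace d0 e then c e else 0)
            rw [← hcomp]
            apply Finset.sum_congr rfl
            intro d _
            by_cases h : M.SameFace d0 d
            · rw [if_pos h, if_pos ((Equiv.Perm.sameCycle_apply_right).2 h)]
            · rw [if_neg h, if_neg (fun hh => h ((Equiv.Perm.sameCycle_apply_right).1 hh))]
          rw [hre]
          ring
        · show T (d, false) + T (M.α d, false) + T (d, true) + T (M.α d, true) = 0
          rw [hc, cob_false, cob_false, cob_true, cob_true,
            facePerm_apply, facePerm_apply, M.α_invol]
          ring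
      · intro i
        have hsc : ∀ d, c (M.σ d) - c d = M.pdcDiff o o' (M.σ d, false) := by
          intro d
          show c (M.σ d) - c d = T (M.σ d, false)
          rw [hc, cob_false, Equiv.Perm.inv_apply_self]
        have hg := gamma_diff M o o' c hsc (B i)
        have hz : ∀ k ∈ (Finset.univ : Finset (Fin (B i).n)),
            ((M.pdcDiff o o' ((B i).darts k, true) + c ((B i).darts k)
                - c (M.facePerm ((B i).darts k)))
              - (M.pdcDiff o o' (M.α ((B i).darts k), true) + c (M.α ((B i).darts k))
                - c (M.facePerm (M.α ((B i).darts k))))) = 0 := by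
          intro k _
          have e1 : M.pdcDiff o o' ((B i).darts k, true)
              = c (M.facePerm ((B i).darts k)) - c ((B i).darts k) := by
            show T ((B i).darts k, true) = _
            rw [hc, cob_true]
          have e2 : M.pdcDiff o o' (M.α ((B i).darts k), true)
              = c (M.facePerm (M.α ((B i).darts k))) - c (M.α ((B i).darts k)) := by
            show T (M.α ((B i).darts k), true) = _
            rw [hc, cob_true]
          rw [e1, e2]
          ring
        rw [Finset.sum_congr rfl hz, Finset.sum_const_zero] at hg
        linarith
  exact ⟨part1, part2, part3⟩


end Schnyder
end
end

section
/- Let G be a map on an orientable surface (loops and multiple edges allowed), D0 an orientation of G, and f0 a face of G. Then the set O(G,D0) of all orientations of G homologous to D0, ordered by D ≤_{f0} D' if and only if D\D' is counterclockwise with respect to f0, is a distributive lattice. -/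
/-
Common combinatorial framework.

Maps on compact orientable surfaces are formalized as rotation systems
(combinatorial maps): a finite set of darts together with a permutation `σ`
(counterclockwise successor around each vertex) and a fixed-point-free
involution `α` (reversal of darts).  Vertices are the orbits of `σ`, edges the
orbits of `α`, and the (counterclockwise) facial walks are the orbits of
`σ⁻¹ * α`.  The genus is recovered from the Euler characteristic.

Homology of the map is formalized by flows: integer-valued functions on darts;
the subgroup generated by the facial flows plays the role of the boundary
subgroup, two flows being homologous when their difference belongs to it.
Contractibility is formalized combinatorially: null-homotopy of closed walks is
generated by insertion/deletion of spurs and of facial boundaries (and rotation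
of the base point).

Schnyder woods are formalized by their angle labellings (corners ≃ darts, the
corner of dart `d` being the corner between `d` and `σ d` at the tail of `d`);
this follows the paper, where (generalized) Schnyder woods are exactly the
EDGE, ℕ*-VERTEX, ℕ*-FACE angle labellings, and where around an edge `{d, α d}`
the four corners in clockwise order are `d, σ⁻¹ (α d), α d, σ⁻¹ d`.
-/

noncomputable section
open scoped Classical

namespace Schnyder

/-! ### Auxiliary development for Statement 6 -/

section StatementSix

variable (M : CombMap)

/-- A potential: an integer function on darts constant on each face. -/
def FaceConst (φ : M.D → ℤ) : Prop := ∀ d d', M.SameFace d d' → φ d = φ d'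

/-- A choice of representative dart on each face. -/
def frep (d : M.D) : M.D := (Quotient.mk (permSetoid M.facePerm) d).out

lemma frep_sameFace (d : M.D) : M.SameFace (frep M d) d :=
  Quotient.mk_out (s := permSetoid M.facePerm) d

lemma frep_eq_of_sameFace {d d' : M.D} (h : M.SameFace d d') : frep M d = frep M d' := by
  unfold frep
  congr 1
  exact Quotient.sound h

lemma frep_idem (d : M.D) : frep M (frep M d) = frep M d :=
  frep_eq_of_sameFace M (frep_sameFace M d)

lemma sum_indicator (φ : M.D → ℤ) (hφ : FaceConst M φ) (e : M.D) :
    (∑ d : M.D, (if frep M d = d then φ d else 0) *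
      (if M.facePerm.SameCycle d e then 1 else 0)) = φ e := by
  rw [Finset.sum_eq_single (frep M e)]
  · rw [if_pos (frep_idem M e), if_pos (frep_sameFace M e), mul_one]
    exact hφ _ _ (frep_sameFace M e)
  · intro b _ hb
    rcases eq_or_ne (frep M b) b with h1 | h1
    · by_cases h2 : M.facePerm.SameCycle b e
      · exact absurd (h1.symm.trans (frep_eq_of_sameFace M h2)) hb
      · simp [h2]
    · simp [h1]
  · intro h; exact absurd (Finset.mem_univ _) h

lemma sum_smul_faceFlow_apply (c : M.D → ℤ) (e : M.D) :
    (∑ d : M.D, c d • faceFlow M.σ M.α d) e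
      = (∑ d : M.D, c d * (if M.facePerm.SameCycle d e then 1 else 0))
        - ∑ d : M.D, c d * (if M.facePerm.SameCycle d (M.α e) then 1 else 0) := by
  rw [Finset.sum_apply, ← Finset.sum_sub_distrib]
  apply Finset.sum_congr rfl
  intro d _
  by_cases h1 : M.facePerm.SameCycle d e <;> by_cases h2 : M.facePerm.SameCycle d (M.α e) <;>
    simp [faceFlow, h1, h2, show fperm M.σ M.α = M.facePerm from rfl]

lemma rep_sum (φ : M.D → ℤ) (hφ : FaceConst M φ) :
    (∑ d : M.D, (if frep M d = d then φ d else 0) • faceFlow M.σ M.α d)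
      = fun e => φ e - φ (M.α e) := by
  funext e
  rw [sum_smul_faceFlow_apply, sum_indicator M φ hφ e, sum_indicator M φ hφ (M.α e)]

lemma delta_mem (φ : M.D → ℤ) (hφ : FaceConst M φ) :
    (fun e => φ e - φ (M.α e)) ∈ facialSubgroup M.σ M.α := by
  rw [← rep_sum M φ hφ]
  exact AddSubgroup.sum_mem _ fun d _ =>
    AddSubgroup.zsmul_mem _ (AddSubgroup.subset_closure (Set.mem_range_self d)) _

lemma exists_faceConst (t : M.D → ℤ) (ht : t ∈ facialSubgroup M.σ M.α) :
    ∃ φ, FaceConst M φ ∧ ∀ e, t e = φ e - φ (M.α e) := by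
  induction ht using AddSubgroup.closure_induction with
  | mem x hx =>
    obtain ⟨d0, rfl⟩ := hx
    refine ⟨fun e => if M.facePerm.SameCycle d0 e then 1 else 0, ?_, ?_⟩
    · intro a b h
      have : M.facePerm.SameCycle d0 a ↔ M.facePerm.SameCycle d0 b :=
        ⟨fun h' => h'.trans h, fun h' => h'.trans h.symm⟩
      simp [this]
    · intro e
      unfold faceFlow CombMap.facePerm
      split_ifs with h1 h2 h3 <;> simp_all
  | zero => exact ⟨0, fun _ _ _ => rfl, by simp⟩
  | add x y _ _ hx hy =>
    obtain ⟨φ, hφ, hφ'⟩ := hx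
    obtain ⟨ψ, hψ, hψ'⟩ := hy
    refine ⟨φ + ψ, fun a b h => by simp [hφ a b h, hψ a b h], fun e => ?_⟩
    simp only [Pi.add_apply, hφ' e, hψ' e]
    ring
  | neg x _ hx =>
    obtain ⟨φ, hφ, hφ'⟩ := hx
    refine ⟨-φ, fun a b h => by simp [hφ a b h], fun e => ?_⟩
    simp only [Pi.neg_apply, hφ' e]
    ring

lemma faceConst_eq (φ ψ : M.D → ℤ) (hφ : FaceConst M φ) (hψ : FaceConst M ψ)
    (h : ∀ e, φ e - φ (M.α e) = ψ e - ψ (M.α e)) (f0 : M.D) (h0 : φ f0 = ψ f0) :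
    φ = ψ := by
  have hα : ∀ e, φ (M.α e) - ψ (M.α e) = φ e - ψ e := fun e => by
    have := h e; linarith
  have hface : ∀ e, φ (M.facePerm e) - ψ (M.facePerm e) = φ e - ψ e := fun e => by
    have h1 : M.SameFace e (M.facePerm e) := ⟨1, by simp⟩
    rw [hφ e (M.facePerm e) h1, hψ e (M.facePerm e) h1]
  have hσ : ∀ e, φ (M.σ e) - ψ (M.σ e) = φ e - ψ e := by
    intro e
    have h1 := hface (M.α (M.σ e))
    have h2 : M.facePerm (M.α (M.σ e)) = e := by
      simp [CombMap.facePerm, fperm, M.α_invol]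
    rw [h2] at h1
    rw [← hα (M.σ e)]
    exact h1.symm
  have key : ∀ a b : M.D, Relation.EqvGen (fun a b => b = M.σ a ∨ b = M.α a) a b →
      φ a - ψ a = φ b - ψ b := by
    intro a b hab
    induction hab with
    | rel a b hr =>
      rcases hr with rfl | rfl
      · exact (hσ a).symm
      · exact (hα a).symm
    | refl => rfl
    | symm a b _ ih => exact ih.symm
    | trans a b c _ _ ih1 ih2 => exact ih1.trans ih2
  funext e
  have := key e f0 (M.connected e f0)
  have h2 : φ f0 - ψ f0 = 0 := by rw [h0]; ring
  linarith

lemma ccw_iff (φ : M.D → ℤ) (hφ : FaceConst M φ) (f0 : M.D) (h0 : φ f0 = 0) :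
    M.CCWFlow f0 (fun e => φ e - φ (M.α e)) ↔ ∀ e, 0 ≤ φ e := by
  constructor
  · rintro ⟨c, hc0, hsum⟩
    have hψc : FaceConst M (fun x => ∑ d : M.D, (c d : ℤ) *
        (if M.facePerm.SameCycle d x then 1 else 0)) := by
      intro a b hab
      apply Finset.sum_congr rfl
      intro d _
      have : M.facePerm.SameCycle d a ↔ M.facePerm.SameCycle d b :=
        ⟨fun h' => h'.trans hab, fun h' => h'.trans hab.symm⟩
      simp [this]
    have hψ0 : (∑ d : M.D, (c d : ℤ) * (if M.facePerm.SameCycle d f0 then 1 else 0)) = 0 := by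
      apply Finset.sum_eq_zero
      intro d _
      by_cases h : M.facePerm.SameCycle d f0
      · simp [hc0 d h]
      · simp [h]
    have hδ : ∀ e, φ e - φ (M.α e)
        = (∑ d : M.D, (c d : ℤ) * (if M.facePerm.SameCycle d e then 1 else 0))
          - ∑ d : M.D, (c d : ℤ) * (if M.facePerm.SameCycle d (M.α e) then 1 else 0) := by
      intro e
      have h1 := congrFun hsum e
      rwa [sum_smul_faceFlow_apply] at h1
    have heq := faceConst_eq M φ _ hφ hψc hδ f0 (by rw [h0, hψ0])
    intro e
    rw [congrFun heq e]
    apply Finset.sum_nonneg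
    intro d _
    by_cases h : M.facePerm.SameCycle d e <;> simp [h]
  · intro hpos
    refine ⟨fun d => if frep M d = d then (φ d).toNat else 0, ?_, ?_⟩
    · intro d hd
      by_cases h : frep M d = d
      · have hd0 : φ d = 0 := by rw [hφ d f0 hd, h0]
        simp [h, hd0]
      · simp [h]
    · have hcoef : ∀ d : M.D,
          (((if frep M d = d then (φ d).toNat else 0 : ℕ) : ℤ)) • faceFlow M.σ M.α d
            = (if frep M d = d then φ d else 0) • faceFlow M.σ M.α d := by
        intro d
        by_cases h : frep M d = d <;> simp [h, Int.toNat_of_nonneg (hpos d)]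
      rw [Finset.sum_congr rfl (fun d _ => hcoef d), rep_sum M φ hφ]

end StatementSix

/-- Let `G` be a map on an orientable surface (loops and
multiple edges allowed), `D0` an orientation of `G` and `f0` a face of `G`.
Then the set `O(G,D0)` of orientations of `G` homologous to `D0`, ordered by
`D ≤_{f0} D'` iff `D \ D'` is counterclockwise with respect to `f0`, is a
distributive lattice. -/
theorem homologous_orientations_distributive_lattice
    (M : CombMap) (D0 : Set M.D) (hD0 : M.IsOrientation D0) (f0 : M.D) :
    ∃ inst : DistribLattice
        {A : Set M.D // M.IsOrientation A ∧ M.orientDiffFlow A D0 ∈ facialSubgroup M.σ M.α},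
      ∀ X Y, distribLE inst X Y ↔ M.CCWFlow f0 (M.orientDiffFlow X.1 Y.1) := by
  classical
  have potSpec : ∀ X : {A : Set M.D // M.IsOrientation A ∧
      M.orientDiffFlow A D0 ∈ facialSubgroup M.σ M.α},
      ∃ φ : M.D → ℤ, FaceConst M φ ∧ (∀ e, M.orientDiffFlow X.1 D0 e = φ e - φ (M.α e)) ∧
        φ f0 = 0 := by
    intro X
    obtain ⟨φ, hc, he⟩ := exists_faceConst M _ X.2.2
    refine ⟨fun e => φ e - φ f0, ?_, ?_, by ring⟩
    · intro a b h
      simp only [hc a b h]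
    · intro e
      rw [he e]
      ring
  choose pot potConst potDiff pot0 using potSpec
  have diffFlow_eq : ∀ (A B : Set M.D) (e : M.D),
      M.orientDiffFlow A B e = (if e ∈ A then (1:ℤ) else 0) - (if e ∈ B then 1 else 0) := by
    intro A B e
    unfold CombMap.orientDiffFlow
    by_cases hA : e ∈ A <;> by_cases hB : e ∈ B <;> simp [hA, hB]
  have chi : ∀ X e, (if e ∈ X.1 then (1:ℤ) else 0)
      = (if e ∈ D0 then (1:ℤ) else 0) + (pot X e - pot X (M.α e)) := by
    intro X e
    have h := potDiff X e
    rw [diffFlow_eq] at h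
    linarith
  have pot_inj : Function.Injective pot := by
    intro X Y h
    apply Subtype.ext
    ext e
    have h1 := chi X e
    have h2 := chi Y e
    rw [h] at h1
    rw [← h2] at h1
    by_cases hx : e ∈ X.1 <;> by_cases hy : e ∈ Y.1 <;> simp_all
  have range01 : ∀ X e, (if e ∈ D0 then (1:ℤ) else 0) + (pot X e - pot X (M.α e)) = 0
      ∨ (if e ∈ D0 then (1:ℤ) else 0) + (pot X e - pot X (M.α e)) = 1 := by
    intro X e
    rw [← chi X e]
    by_cases h : e ∈ X.1 <;> simp [h]
  have key01 : ∀ v : ℤ, 0 ≤ v → v ≤ 1 → (if v = 1 then (1:ℤ) else 0) = v := by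
    intro v h1 h2
    by_cases h : v = 1 <;> simp [h] <;> omega
  have hsum1 : ∀ e : M.D, (if e ∈ D0 then (1:ℤ) else 0) + (if M.α e ∈ D0 then (1:ℤ) else 0) = 1 := by
    intro e
    have hD := hD0 e
    by_cases h : e ∈ D0
    · simp [h, hD.mp h]
    · have h2 : M.α e ∈ D0 := by
        by_contra hh
        exact h (hD.mpr hh)
      simp [h, h2]
  have mk : ∀ m : M.D → ℤ, FaceConst M m → m f0 = 0 →
      (∀ e, (0:ℤ) ≤ (if e ∈ D0 then (1:ℤ) else 0) + (m e - m (M.α e)) ∧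
        (if e ∈ D0 then (1:ℤ) else 0) + (m e - m (M.α e)) ≤ 1) →
      ∃ Z, pot Z = m := by
    intro m hmc hm0 hrange
    have chiA : ∀ e, (if e ∈ {x : M.D |
          (if x ∈ D0 then (1:ℤ) else 0) + (m x - m (M.α x)) = 1} then (1:ℤ) else 0)
        = (if e ∈ D0 then (1:ℤ) else 0) + (m e - m (M.α e)) := by
      intro e
      simp only [Set.mem_setOf_eq]
      exact key01 _ (hrange e).1 (hrange e).2
    have horient : M.IsOrientation {x : M.D |
        (if x ∈ D0 then (1:ℤ) else 0) + (m x - m (M.α x)) = 1} := by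
      intro e
      have h1 := hsum1 e
      have hin : M.α (M.α e) = e := M.α_invol e
      rcases hrange e with ⟨ha, hb⟩
      simp only [Set.mem_setOf_eq, hin]
      by_cases hd : e ∈ D0 <;> by_cases hd' : M.α e ∈ D0 <;>
        simp only [hd, hd', if_true, if_false] at h1 ha hb ⊢ <;>
        constructor <;> intro <;> omega
    have hdiff : M.orientDiffFlow {x : M.D |
        (if x ∈ D0 then (1:ℤ) else 0) + (m x - m (M.α x)) = 1} D0
          = fun e => m e - m (M.α e) := by
      funext e
      rw [diffFlow_eq]
      by_cases h : (if e ∈ D0 then (1:ℤ) else 0) + (m e - m (M.α e)) = 1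
      · rw [if_pos (show e ∈ {x : M.D |
          (if x ∈ D0 then (1:ℤ) else 0) + (m x - m (M.α x)) = 1} from h)]
        linarith
      · rw [if_neg (show e ∉ {x : M.D |
          (if x ∈ D0 then (1:ℤ) else 0) + (m x - m (M.α x)) = 1} from h)]
        rcases hrange e with ⟨ha, hb⟩
        generalize (if e ∈ D0 then (1:ℤ) else 0) = u at ha hb h ⊢
        omega
    refine ⟨⟨_, horient, by rw [hdiff]; exact delta_mem M m hmc⟩, ?_⟩
    refine faceConst_eq M _ m (potConst _) hmc ?_ f0 ?_
    · intro e
      rw [← potDiff ⟨_, horient, by rw [hdiff]; exact delta_mem M m hmc⟩ e]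
      exact congrFun hdiff e
    · rw [pot0, hm0]
  have minSpec : ∀ X Y, ∃ Z, pot Z = fun e => min (pot X e) (pot Y e) := by
    intro X Y
    apply mk
    · intro a b h
      simp only [potConst X a b h, potConst Y a b h]
    · simp [pot0 X, pot0 Y]
    · intro e
      have h1 := range01 X e
      have h2 := range01 Y e
      generalize (if e ∈ D0 then (1:ℤ) else 0) = u at h1 h2 ⊢
      constructor <;> omega
  have maxSpec : ∀ X Y, ∃ Z, pot Z = fun e => max (pot X e) (pot Y e) := by
    intro X Y
    apply mk
    · intro a b h
      simp only [potConst X a b h, potConst Y a b h]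
    · simp [pot0 X, pot0 Y]
    · intro e
      have h1 := range01 X e
      have h2 := range01 Y e
      generalize (if e ∈ D0 then (1:ℤ) else 0) = u at h1 h2 ⊢
      constructor <;> omega
  choose supO hsupO using minSpec
  choose infO hinfO using maxSpec
  letI instMax : Max {A : Set M.D // M.IsOrientation A ∧
      M.orientDiffFlow A D0 ∈ facialSubgroup M.σ M.α} := ⟨supO⟩
  letI instMin : Min {A : Set M.D // M.IsOrientation A ∧
      M.orientDiffFlow A D0 ∈ facialSubgroup M.σ M.α} := ⟨infO⟩
  have hmin : ∀ X Y, (pot X ⊓ pot Y) = fun e => min (pot X e) (pot Y e) := by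
    intro X Y
    funext e
    rfl
  have hmax : ∀ X Y, (pot X ⊔ pot Y) = fun e => max (pot X e) (pot Y e) := by
    intro X Y
    funext e
    rfl
  letI instLE : LE {A : Set M.D // M.IsOrientation A ∧
        M.orientDiffFlow A D0 ∈ facialSubgroup M.σ M.α} := ⟨fun X Y => pot Y ≤ pot X⟩
  letI instLT : LT {A : Set M.D // M.IsOrientation A ∧
        M.orientDiffFlow A D0 ∈ facialSubgroup M.σ M.α} := ⟨fun X Y => pot Y < pot X⟩
  letI instD : DistribLattice {A : Set M.D // M.IsOrientation A ∧
      M.orientDiffFlow A D0 ∈ facialSubgroup M.σ M.α} :=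
    Function.Injective.distribLattice (β := (M.D → ℤ)ᵒᵈ)
      (fun X => OrderDual.toDual (pot X))
      (fun X Y h => pot_inj (OrderDual.toDual.injective h))
      Iff.rfl Iff.rfl
      (fun a b => by
        show OrderDual.toDual (pot (supO a b)) = OrderDual.toDual (pot a ⊓ pot b)
        rw [hsupO a b, hmin a b])
      (fun a b => by
        show OrderDual.toDual (pot (infO a b)) = OrderDual.toDual (pot a ⊔ pot b)
        rw [hinfO a b, hmax a b])
  refine ⟨instD, fun X Y => ?_⟩
  have hle : distribLE instD X Y ↔ pot Y ≤ pot X := Iff.rfl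
  have hφc : FaceConst M (fun e => pot X e - pot Y e) := by
    intro a b h
    simp only [potConst X a b h, potConst Y a b h]
  have hφ0 : (fun e => pot X e - pot Y e) f0 = 0 := by
    simp [pot0]
  have hdXY : M.orientDiffFlow X.1 Y.1
      = fun e => (fun x => pot X x - pot Y x) e - (fun x => pot X x - pot Y x) (M.α e) := by
    funext e
    simp only
    rw [diffFlow_eq]
    have h1 := chi X e
    have h2 := chi Y e
    linarith
  rw [hdXY, ccw_iff M _ hφc f0 hφ0, hle]
  constructor
  · intro h e
    have := h e
    simp only at this ⊢
    linarith
  · intro h e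
    have := h e
    simp only at this ⊢
    linarith


end Schnyder
end
end
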